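/- arXiv:2605.01274 — 6 statements merged into one kernel-verified Lean document; each statement's English description precedes it below -/
import Mathlib

section
/- Let f₁, g₁ : (−∞,0] → ℂ and f₂, g₂ : [0,∞) → ℂ be continuously differentiable with f₁(0) = f₂(0), f₁′(0) = f₂′(0), g₁(0) = g₂(0), g₁′(0) = g₂′(0), and suppose f₁, g₁ together with their first derivatives tend to 0 as x → −∞ while f₂, g₂ together with their first derivatives tend to 0 as x → +∞. Define, for x ≤ 0 and t ≥ 0: Ψ₁⁽¹⁾(x,t) = f₁(x−t); Ψ₂⁽¹⁾(x,t) = g₁(x+t) if x+t ≤ 0 and Ψ₂⁽¹⁾(x,t) = g₂(x+t) if x+t > 0; and, for x ≥ 0 and t ≥ 0: Ψ₁⁽²⁾(x,t) = f₂(x−t) if x ≥ t and Ψ₁⁽²⁾(x,t) = f₁(x−t) if x < t; Ψ₂⁽²⁾(x,t) = g₂(x+t). Then these four functions are continuously differentiable and solve the massless Dirac interface problem on two semi-infinite domains with initial data Ψ₁⁽¹⁾(·,0) = f₁, Ψ₂⁽¹⁾(·,0) = g₁, Ψ₁⁽²⁾(·,0) = f₂, Ψ₂⁽²⁾(·,0)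 = g₂; in particular they satisfy the two transport equations on their respective domains, the interface continuity conditions at x = 0, and the decay conditions (of the functions and their first x- and t-derivatives) as x → ∓∞. -/
open Filter

open Set Topology

noncomputable def glueFn (a b : ℝ → ℂ) : ℝ → ℂ := fun y => if y ≤ 0 then a y else b y

noncomputable def glueD (a b : ℝ → ℂ) : ℝ → ℂ :=
  fun y => if y ≤ 0 then derivWithin a (Set.Iic 0) y else derivWithin b (Set.Ici 0) y

lemma glue_hasDerivAt (a b : ℝ → ℂ)
    (ha : ContDiffOn ℝ 1 a (Set.Iic 0)) (hb : ContDiffOn ℝ 1 b (Set.Ici 0))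
    (h0 : a 0 = b 0)
    (h0' : derivWithin a (Set.Iic 0) 0 = derivWithin b (Set.Ici 0) 0) (y : ℝ) :
    HasDerivAt (glueFn a b) (glueD a b y) y := by
  rcases lt_trichotomy y 0 with hy | hy | hy
  · have hmem : Set.Iic (0:ℝ) ∈ 𝓝 y := Iic_mem_nhds hy
    have hd : DifferentiableAt ℝ a y := (ha.contDiffAt hmem).differentiableAt one_ne_zero
    have heq : a =ᶠ[𝓝 y] glueFn a b := by
      filter_upwards [Iio_mem_nhds hy] with z hz
      simp [glueFn, (Set.mem_Iio.mp hz).le]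
    have h2 : HasDerivAt (glueFn a b) (deriv a y) y := hd.hasDerivAt.congr_of_eventuallyEq heq.symm
    have hD : glueD a b y = deriv a y := by
      simp [glueD, hy.le, derivWithin_of_mem_nhds hmem]
    rw [hD]; exact h2
  · subst hy
    have hva : HasDerivWithinAt a (derivWithin a (Set.Iic 0) 0) (Set.Iic 0) 0 :=
      ((ha.differentiableOn one_ne_zero) 0 (by simp)).hasDerivWithinAt
    have hvb : HasDerivWithinAt b (derivWithin b (Set.Ici 0) 0) (Set.Ici 0) 0 :=
      ((hb.differentiableOn one_ne_zero) 0 (by simp)).hasDerivWithinAt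
    have h1 : HasDerivWithinAt (glueFn a b) (derivWithin a (Set.Iic 0) 0) (Set.Iic 0) 0 :=
      hva.congr (fun z hz => by simp [glueFn, (mem_Iic.mp hz)]) (by simp [glueFn])
    have h2 : HasDerivWithinAt (glueFn a b) (derivWithin a (Set.Iic 0) 0) (Set.Ici 0) 0 := by
      rw [h0']
      refine hvb.congr (fun z hz => ?_) (by simp [glueFn, h0])
      rcases eq_or_lt_of_le (mem_Ici.mp hz) with h | h
      · simp [glueFn, ← h, h0]
      · simp [glueFn, not_le.mpr h]
    have h3 := h1.union h2
    rw [Set.Iic_union_Ici] at h3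
    have h4 : HasDerivAt (glueFn a b) (derivWithin a (Set.Iic 0) 0) 0 :=
      hasDerivWithinAt_univ.mp h3
    simpa [glueD] using h4
  · have hmem : Set.Ici (0:ℝ) ∈ 𝓝 y := Ici_mem_nhds hy
    have hd : DifferentiableAt ℝ b y := (hb.contDiffAt hmem).differentiableAt one_ne_zero
    have heq : b =ᶠ[𝓝 y] glueFn a b := by
      filter_upwards [Ioi_mem_nhds hy] with z hz
      simp [glueFn, not_le.mpr (Set.mem_Ioi.mp hz)]
    have h2 : HasDerivAt (glueFn a b) (deriv b y) y := hd.hasDerivAt.congr_of_eventuallyEq heq.symm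
    have hD : glueD a b y = deriv b y := by
      simp [glueD, not_le.mpr hy, derivWithin_of_mem_nhds hmem]
    rw [hD]; exact h2

lemma glueD_continuous (a b : ℝ → ℂ)
    (ha : ContDiffOn ℝ 1 a (Set.Iic 0)) (hb : ContDiffOn ℝ 1 b (Set.Ici 0))
    (h0' : derivWithin a (Set.Iic 0) 0 = derivWithin b (Set.Ici 0) 0) :
    Continuous (glueD a b) := by
  have hca : ContinuousOn (derivWithin a (Set.Iic 0)) (Set.Iic 0) :=
    ha.continuousOn_derivWithin (uniqueDiffOn_Iic 0) le_rfl
  have hcb : ContinuousOn (derivWithin b (Set.Ici 0)) (Set.Ici 0) :=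
    hb.continuousOn_derivWithin (uniqueDiffOn_Ici 0) le_rfl
  rw [continuous_iff_continuousAt]
  intro y
  rcases lt_trichotomy y 0 with hy | hy | hy
  · refine (hca.continuousAt (Iic_mem_nhds hy)).congr ?_
    filter_upwards [Iio_mem_nhds hy] with z hz
    simp [glueD, (Set.mem_Iio.mp hz).le]
  · subst hy
    have h1 : ContinuousWithinAt (glueD a b) (Set.Iic 0) 0 := by
      refine ((hca 0 (by simp)).congr (fun z hz => ?_) (by simp [glueD]))
      simp [glueD, mem_Iic.mp hz]
    have h2 : ContinuousWithinAt (glueD a b) (Set.Ici 0) 0 := by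
      refine ((hcb 0 (by simp)).congr (fun z hz => ?_) (by simp [glueD, h0']))
      rcases eq_or_lt_of_le (mem_Ici.mp hz) with h | h
      · simp [glueD, ← h, h0']
      · simp [glueD, not_le.mpr h]
    have h3 := h1.union h2
    rw [Set.Iic_union_Ici] at h3
    exact continuousWithinAt_univ _ _ |>.mp h3
  · refine (hcb.continuousAt (Ici_mem_nhds hy)).congr ?_
    filter_upwards [Ioi_mem_nhds hy] with z hz
    simp [glueD, not_le.mpr (Set.mem_Ioi.mp hz)]

lemma glue_contDiff (a b : ℝ → ℂ)
    (ha : ContDiffOn ℝ 1 a (Set.Iic 0)) (hb : ContDiffOn ℝ 1 b (Set.Ici 0))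
    (h0 : a 0 = b 0)
    (h0' : derivWithin a (Set.Iic 0) 0 = derivWithin b (Set.Ici 0) 0) :
    ContDiff ℝ 1 (glueFn a b) := by
  rw [contDiff_one_iff_deriv]
  constructor
  · exact fun y => (glue_hasDerivAt a b ha hb h0 h0' y).differentiableAt
  · have : deriv (glueFn a b) = glueD a b :=
      funext fun y => (glue_hasDerivAt a b ha hb h0 h0' y).deriv
    rw [this]
    exact glueD_continuous a b ha hb h0'

/-- Verification of the explicit solution of the massless Dirac interface problem on the
two semi-infinite domains `(-∞,0]` and `[0,∞)`: the piecewise transport waves built from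
compatible, decaying `C¹` data `f₁, g₁` (left) and `f₂, g₂` (right) are continuously
differentiable, solve the two transport equations, take the prescribed initial values,
are continuous across the interface `x = 0`, and decay (together with their first `x`-
and `t`-derivatives) as `x → ∓∞`. -/
theorem massless_dirac_interface_solution_semiinfinite
    (f₁ g₁ f₂ g₂ : ℝ → ℂ)
    (hf₁ : ContDiffOn ℝ 1 f₁ (Set.Iic 0)) (hg₁ : ContDiffOn ℝ 1 g₁ (Set.Iic 0))
    (hf₂ : ContDiffOn ℝ 1 f₂ (Set.Ici 0)) (hg₂ : ContDiffOn ℝ 1 g₂ (Set.Ici 0))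
    (hf0 : f₁ 0 = f₂ 0)
    (hf0' : derivWithin f₁ (Set.Iic 0) 0 = derivWithin f₂ (Set.Ici 0) 0)
    (hg0 : g₁ 0 = g₂ 0)
    (hg0' : derivWithin g₁ (Set.Iic 0) 0 = derivWithin g₂ (Set.Ici 0) 0)
    (hf₁dec : Tendsto f₁ atBot (nhds 0))
    (hf₁dec' : Tendsto (derivWithin f₁ (Set.Iic 0)) atBot (nhds 0))
    (hg₁dec : Tendsto g₁ atBot (nhds 0))
    (hg₁dec' : Tendsto (derivWithin g₁ (Set.Iic 0)) atBot (nhds 0))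
    (hf₂dec : Tendsto f₂ atTop (nhds 0))
    (hf₂dec' : Tendsto (derivWithin f₂ (Set.Ici 0)) atTop (nhds 0))
    (hg₂dec : Tendsto g₂ atTop (nhds 0))
    (hg₂dec' : Tendsto (derivWithin g₂ (Set.Ici 0)) atTop (nhds 0))
    (Ψ₁₁ Ψ₂₁ Ψ₁₂ Ψ₂₂ : ℝ × ℝ → ℂ)
    (hΨ₁₁ : ∀ x t : ℝ, Ψ₁₁ (x, t) = f₁ (x - t))
    (hΨ₂₁ : ∀ x t : ℝ, Ψ₂₁ (x, t) = if x + t ≤ 0 then g₁ (x + t) else g₂ (x + t))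
    (hΨ₁₂ : ∀ x t : ℝ, Ψ₁₂ (x, t) = if t ≤ x then f₂ (x - t) else f₁ (x - t))
    (hΨ₂₂ : ∀ x t : ℝ, Ψ₂₂ (x, t) = g₂ (x + t)) :
    -- continuous differentiability on the two space-time domains
    (ContDiffOn ℝ 1 Ψ₁₁ (Set.Iic 0 ×ˢ Set.Ici 0) ∧
     ContDiffOn ℝ 1 Ψ₂₁ (Set.Iic 0 ×ˢ Set.Ici 0) ∧
     ContDiffOn ℝ 1 Ψ₁₂ (Set.Ici 0 ×ˢ Set.Ici 0) ∧
     ContDiffOn ℝ 1 Ψ₂₂ (Set.Ici 0 ×ˢ Set.Ici 0)) ∧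
    -- the transport equations of the massless Dirac system
    (∀ x < (0:ℝ), ∀ t > (0:ℝ),
      Complex.I * deriv (fun s : ℝ => Ψ₁₁ (x, s)) t =
        -Complex.I * deriv (fun y : ℝ => Ψ₁₁ (y, t)) x ∧
      Complex.I * deriv (fun s : ℝ => Ψ₂₁ (x, s)) t =
        Complex.I * deriv (fun y : ℝ => Ψ₂₁ (y, t)) x) ∧
    (∀ x > (0:ℝ), ∀ t > (0:ℝ),
      Complex.I * deriv (fun s : ℝ => Ψ₁₂ (x, s)) t =
        -Complex.I * deriv (fun y : ℝ => Ψ₁₂ (y, t)) x ∧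
      Complex.I * deriv (fun s : ℝ => Ψ₂₂ (x, s)) t =
        Complex.I * deriv (fun y : ℝ => Ψ₂₂ (y, t)) x) ∧
    -- initial conditions
    (∀ x ≤ (0:ℝ), Ψ₁₁ (x, 0) = f₁ x ∧ Ψ₂₁ (x, 0) = g₁ x) ∧
    (∀ x ≥ (0:ℝ), Ψ₁₂ (x, 0) = f₂ x ∧ Ψ₂₂ (x, 0) = g₂ x) ∧
    -- interface continuity at x = 0
    (∀ t > (0:ℝ), Ψ₁₁ (0, t) = Ψ₁₂ (0, t) ∧ Ψ₂₁ (0, t) = Ψ₂₂ (0, t)) ∧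
    -- decay of the solutions and their first derivatives as x → -∞
    (∀ Ψ ∈ [Ψ₁₁, Ψ₂₁], ∀ t ≥ (0:ℝ),
      Tendsto (fun x => Ψ (x, t)) atBot (nhds 0) ∧
      Tendsto (fun x => deriv (fun y : ℝ => Ψ (y, t)) x) atBot (nhds 0) ∧
      Tendsto (fun x => deriv (fun s : ℝ => Ψ (x, s)) t) atBot (nhds 0)) ∧
    -- decay of the solutions and their first derivatives as x → +∞
    (∀ Ψ ∈ [Ψ₁₂, Ψ₂₂], ∀ t ≥ (0:ℝ),
      Tendsto (fun x => Ψ (x, t)) atTop (nhds 0) ∧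
      Tendsto (fun x => deriv (fun y : ℝ => Ψ (y, t)) x) atTop (nhds 0) ∧
      Tendsto (fun x => deriv (fun s : ℝ => Ψ (x, s)) t) atTop (nhds 0)) := by
  have hF := glue_hasDerivAt f₁ f₂ hf₁ hf₂ hf0 hf0'
  have hFc := glue_contDiff f₁ f₂ hf₁ hf₂ hf0 hf0'
  have hG := glue_hasDerivAt g₁ g₂ hg₁ hg₂ hg0 hg0'
  have hGc := glue_contDiff g₁ g₂ hg₁ hg₂ hg0 hg0'
  -- pointwise descriptions of glueFn
  have hfeq : ∀ y : ℝ, y ≤ 0 → glueFn f₁ f₂ y = f₁ y := fun y hy => by simp [glueFn, hy]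
  have hgeq : ∀ y : ℝ, y ≤ 0 → glueFn g₁ g₂ y = g₁ y := fun y hy => by simp [glueFn, hy]
  have hfeq2 : ∀ y : ℝ, 0 ≤ y → glueFn f₁ f₂ y = f₂ y := fun y hy => by
    rcases eq_or_lt_of_le hy with h | h
    · simp [glueFn, ← h, hf0]
    · simp [glueFn, not_le.mpr h]
  have hgeq2 : ∀ y : ℝ, 0 ≤ y → glueFn g₁ g₂ y = g₂ y := fun y hy => by
    rcases eq_or_lt_of_le hy with h | h
    · simp [glueFn, ← h, hg0]
    · simp [glueFn, not_le.mpr h]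
  -- rewrite the solutions as global formulas
  have hΨ₁₁' : Ψ₁₁ = fun p : ℝ × ℝ => f₁ (p.1 - p.2) := funext fun p => by
    obtain ⟨x, t⟩ := p; exact hΨ₁₁ x t
  have hΨ₂₁' : Ψ₂₁ = fun p : ℝ × ℝ => glueFn g₁ g₂ (p.1 + p.2) := funext fun p => by
    obtain ⟨x, t⟩ := p; exact hΨ₂₁ x t
  have hΨ₁₂' : Ψ₁₂ = fun p : ℝ × ℝ => glueFn f₁ f₂ (p.1 - p.2) := funext fun p => by
    obtain ⟨x, t⟩ := p
    rw [hΨ₁₂]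
    rcases lt_trichotomy (x - t) 0 with h | h | h
    · rw [if_neg (by linarith), (hfeq _ h.le)]
    · rw [if_pos (by linarith), h, hfeq 0 le_rfl]
      exact hf0.symm
    · rw [if_pos (by linarith), (hfeq2 _ h.le)]
  have hΨ₂₂' : Ψ₂₂ = fun p : ℝ × ℝ => g₂ (p.1 + p.2) := funext fun p => by
    obtain ⟨x, t⟩ := p; exact hΨ₂₂ x t
  subst hΨ₁₁' hΨ₂₁' hΨ₁₂' hΨ₂₂'
  -- derivative helpers
  have hFsub : ∀ x t : ℝ, HasDerivAt (fun y => glueFn f₁ f₂ (y - t)) (glueD f₁ f₂ (x - t)) x :=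
    fun x t => by
      have hid : HasDerivAt (fun y : ℝ => y - t) 1 x := by
        simpa using (hasDerivAt_id x).sub_const t
      have := (hF (x - t)).scomp x hid
      simp only [one_smul, neg_smul] at this
      exact this
  have hFsubt : ∀ x t : ℝ, HasDerivAt (fun s => glueFn f₁ f₂ (x - s)) (-glueD f₁ f₂ (x - t)) t :=
    fun x t => by
      have hid : HasDerivAt (fun s : ℝ => x - s) (-1) t := by
        simpa using (hasDerivAt_id t).const_sub x
      have := (hF (x - t)).scomp t hid
      simp only [one_smul, neg_smul] at this
      exact this
  have hGadd : ∀ x t : ℝ, HasDerivAt (fun y => glueFn g₁ g₂ (y + t)) (glueD g₁ g₂ (x + t)) x :=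
    fun x t => by
      have hid : HasDerivAt (fun y : ℝ => y + t) 1 x := by
        simpa using (hasDerivAt_id x).add_const t
      have := (hG (x + t)).scomp x hid
      simp only [one_smul, neg_smul] at this
      exact this
  have hGaddt : ∀ x t : ℝ, HasDerivAt (fun s => glueFn g₁ g₂ (x + s)) (glueD g₁ g₂ (x + t)) t :=
    fun x t => by
      have hid : HasDerivAt (fun s : ℝ => x + s) 1 t := by
        simpa using (hasDerivAt_id t).const_add x
      have := (hG (x + t)).scomp t hid
      simp only [one_smul, neg_smul] at this
      exact this
  refine ⟨⟨?_, ?_, ?_, ?_⟩, ?_, ?_, ?_, ?_, ?_, ?_, ?_⟩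
  · -- Ψ₁₁ smooth
    refine ((hFc.comp (contDiff_fst.sub contDiff_snd)).contDiffOn).congr fun p hp => ?_
    have h1 : p.1 ≤ 0 := hp.1
    have h2 : (0:ℝ) ≤ p.2 := hp.2
    have hle : p.1 - p.2 ≤ 0 := by linarith
    exact (hfeq _ hle).symm
  · -- Ψ₂₁ smooth
    exact (hGc.comp (contDiff_fst.add contDiff_snd)).contDiffOn
  · -- Ψ₁₂ smooth
    exact (hFc.comp (contDiff_fst.sub contDiff_snd)).contDiffOn
  · -- Ψ₂₂ smooth
    refine ((hGc.comp (contDiff_fst.add contDiff_snd)).contDiffOn).congr fun p hp => ?_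
    have h1 : (0:ℝ) ≤ p.1 := hp.1
    have h2 : (0:ℝ) ≤ p.2 := hp.2
    have hle : (0:ℝ) ≤ p.1 + p.2 := by linarith
    exact (hgeq2 _ hle).symm
  · -- PDE left
    intro x hx t ht
    constructor
    · have e1 : deriv (fun s : ℝ => f₁ (x - s)) t = -glueD f₁ f₂ (x - t) := by
        have hev : (fun s : ℝ => f₁ (x - s)) =ᶠ[𝓝 t] fun s => glueFn f₁ f₂ (x - s) := by
          filter_upwards [eventually_gt_nhds (show x < t by linarith)] with s hs
          exact (hfeq (x - s) (by linarith)).symm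
        rw [hev.deriv_eq]; exact (hFsubt x t).deriv
      have e2 : deriv (fun y : ℝ => f₁ (y - t)) x = glueD f₁ f₂ (x - t) := by
        have hev : (fun y : ℝ => f₁ (y - t)) =ᶠ[𝓝 x] fun y => glueFn f₁ f₂ (y - t) := by
          filter_upwards [eventually_lt_nhds (show x < t by linarith)] with y hy
          exact (hfeq (y - t) (by linarith)).symm
        rw [hev.deriv_eq]; exact (hFsub x t).deriv
      show Complex.I * deriv (fun s : ℝ => f₁ (x - s)) t =
        -Complex.I * deriv (fun y : ℝ => f₁ (y - t)) x
      rw [e1, e2]; ring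
    · show Complex.I * deriv (fun s : ℝ => glueFn g₁ g₂ (x + s)) t =
        Complex.I * deriv (fun y : ℝ => glueFn g₁ g₂ (y + t)) x
      rw [(hGaddt x t).deriv, (hGadd x t).deriv]
  · -- PDE right
    intro x hx t ht
    constructor
    · show Complex.I * deriv (fun s : ℝ => glueFn f₁ f₂ (x - s)) t =
        -Complex.I * deriv (fun y : ℝ => glueFn f₁ f₂ (y - t)) x
      rw [(hFsubt x t).deriv, (hFsub x t).deriv]; ring
    · have e1 : deriv (fun s : ℝ => g₂ (x + s)) t = glueD g₁ g₂ (x + t) := by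
        have hev : (fun s : ℝ => g₂ (x + s)) =ᶠ[𝓝 t] fun s => glueFn g₁ g₂ (x + s) := by
          filter_upwards [eventually_gt_nhds (show -x < t by linarith)] with s hs
          exact (hgeq2 (x + s) (by linarith)).symm
        rw [hev.deriv_eq]; exact (hGaddt x t).deriv
      have e2 : deriv (fun y : ℝ => g₂ (y + t)) x = glueD g₁ g₂ (x + t) := by
        have hev : (fun y : ℝ => g₂ (y + t)) =ᶠ[𝓝 x] fun y => glueFn g₁ g₂ (y + t) := by
          filter_upwards [eventually_gt_nhds (show -t < x by linarith)] with y hy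
          exact (hgeq2 (y + t) (by linarith)).symm
        rw [hev.deriv_eq]; exact (hGadd x t).deriv
      show Complex.I * deriv (fun s : ℝ => g₂ (x + s)) t =
        Complex.I * deriv (fun y : ℝ => g₂ (y + t)) x
      rw [e1, e2]
  · -- initial left
    intro x hx
    constructor
    · show f₁ (x - 0) = f₁ x
      rw [sub_zero]
    · show glueFn g₁ g₂ (x + 0) = g₁ x
      rw [add_zero]; exact hgeq x hx
  · -- initial right
    intro x hx
    constructor
    · show glueFn f₁ f₂ (x - 0) = f₂ x
      rw [sub_zero]; exact hfeq2 x hx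
    · show g₂ (x + 0) = g₂ x
      rw [add_zero]
  · -- interface
    intro t ht
    constructor
    · show f₁ (0 - t) = glueFn f₁ f₂ (0 - t)
      exact (hfeq (0 - t) (by linarith)).symm
    · show glueFn g₁ g₂ (0 + t) = g₂ (0 + t)
      exact hgeq2 (0 + t) (by linarith)
  · -- decay left
    intro Ψ hΨ t ht
    have hsub : Tendsto (fun x : ℝ => x - t) atBot atBot := by
      simpa [sub_eq_add_neg] using tendsto_atBot_add_const_right atBot (-t) tendsto_id
    have hadd : Tendsto (fun x : ℝ => x + t) atBot atBot :=
      tendsto_atBot_add_const_right atBot t tendsto_id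
    simp only [List.mem_cons, List.not_mem_nil, or_false] at hΨ
    rcases hΨ with h | h <;> subst h
    · refine ⟨hf₁dec.comp hsub, ?_, ?_⟩
      · have hev : ∀ᶠ x in atBot,
            derivWithin f₁ (Set.Iic 0) (x - t) = deriv (fun y : ℝ => f₁ (y - t)) x := by
          filter_upwards [eventually_lt_atBot t] with x hx
          have hev2 : (fun y : ℝ => f₁ (y - t)) =ᶠ[𝓝 x] fun y => glueFn f₁ f₂ (y - t) := by
            filter_upwards [eventually_lt_nhds hx] with y hy
            exact (hfeq (y - t) (by linarith)).symm
          rw [hev2.deriv_eq, (hFsub x t).deriv]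
          simp [glueD, (show x - t ≤ 0 by linarith)]
        exact (hf₁dec'.comp hsub).congr' hev
      · have hev : ∀ᶠ x in atBot,
            -derivWithin f₁ (Set.Iic 0) (x - t) = deriv (fun s : ℝ => f₁ (x - s)) t := by
          filter_upwards [eventually_lt_atBot t] with x hx
          have hev2 : (fun s : ℝ => f₁ (x - s)) =ᶠ[𝓝 t] fun s => glueFn f₁ f₂ (x - s) := by
            filter_upwards [eventually_gt_nhds hx] with s hs
            exact (hfeq (x - s) (by linarith)).symm
          rw [hev2.deriv_eq, (hFsubt x t).deriv]
          simp [glueD, (show x - t ≤ 0 by linarith)]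
        have := ((hf₁dec'.comp hsub).neg).congr' hev
        simpa using this
    · refine ⟨?_, ?_, ?_⟩
      · refine (hg₁dec.comp hadd).congr' ?_
        filter_upwards [eventually_le_atBot (-t)] with x hx
        exact (hgeq (x + t) (by linarith)).symm
      · have hev : ∀ᶠ x in atBot,
            derivWithin g₁ (Set.Iic 0) (x + t) = deriv (fun y : ℝ => glueFn g₁ g₂ (y + t)) x := by
          filter_upwards [eventually_le_atBot (-t)] with x hx
          rw [(hGadd x t).deriv]
          simp [glueD, (show x + t ≤ 0 by linarith)]
        exact (hg₁dec'.comp hadd).congr' hev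
      · have hev : ∀ᶠ x in atBot,
            derivWithin g₁ (Set.Iic 0) (x + t) = deriv (fun s : ℝ => glueFn g₁ g₂ (x + s)) t := by
          filter_upwards [eventually_le_atBot (-t)] with x hx
          rw [(hGaddt x t).deriv]
          simp [glueD, (show x + t ≤ 0 by linarith)]
        exact (hg₁dec'.comp hadd).congr' hev
  · -- decay right
    intro Ψ hΨ t ht
    have hsub : Tendsto (fun x : ℝ => x - t) atTop atTop := by
      simpa [sub_eq_add_neg] using tendsto_atTop_add_const_right atTop (-t) tendsto_id
    have hadd : Tendsto (fun x : ℝ => x + t) atTop atTop :=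
      tendsto_atTop_add_const_right atTop t tendsto_id
    simp only [List.mem_cons, List.not_mem_nil, or_false] at hΨ
    rcases hΨ with h | h <;> subst h
    · refine ⟨?_, ?_, ?_⟩
      · refine (hf₂dec.comp hsub).congr' ?_
        filter_upwards [eventually_ge_atTop t] with x hx
        exact (hfeq2 (x - t) (by linarith)).symm
      · have hev : ∀ᶠ x in atTop,
            derivWithin f₂ (Set.Ici 0) (x - t) = deriv (fun y : ℝ => glueFn f₁ f₂ (y - t)) x := by
          filter_upwards [eventually_gt_atTop t] with x hx
          rw [(hFsub x t).deriv]
          simp [glueD, not_le.mpr (show (0:ℝ) < x - t by linarith)]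
        exact (hf₂dec'.comp hsub).congr' hev
      · have hev : ∀ᶠ x in atTop,
            -derivWithin f₂ (Set.Ici 0) (x - t) = deriv (fun s : ℝ => glueFn f₁ f₂ (x - s)) t := by
          filter_upwards [eventually_gt_atTop t] with x hx
          rw [(hFsubt x t).deriv]
          simp [glueD, not_le.mpr (show (0:ℝ) < x - t by linarith)]
        have := ((hf₂dec'.comp hsub).neg).congr' hev
        simpa using this
    · refine ⟨hg₂dec.comp hadd, ?_, ?_⟩
      · have hev : ∀ᶠ x in atTop,
            derivWithin g₂ (Set.Ici 0) (x + t) = deriv (fun y : ℝ => g₂ (y + t)) x := by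
          filter_upwards [eventually_gt_atTop (-t)] with x hx
          have hev2 : (fun y : ℝ => g₂ (y + t)) =ᶠ[𝓝 x] fun y => glueFn g₁ g₂ (y + t) := by
            filter_upwards [eventually_gt_nhds hx] with y hy
            exact (hgeq2 (y + t) (by linarith)).symm
          rw [hev2.deriv_eq, (hGadd x t).deriv]
          simp [glueD, not_le.mpr (show (0:ℝ) < x + t by linarith)]
        exact (hg₂dec'.comp hadd).congr' hev
      · have hev : ∀ᶠ x in atTop,
            derivWithin g₂ (Set.Ici 0) (x + t) = deriv (fun s : ℝ => g₂ (x + s)) t := by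
          filter_upwards [eventually_gt_atTop (-t)] with x hx
          have hev2 : (fun s : ℝ => g₂ (x + s)) =ᶠ[𝓝 t] fun s => glueFn g₁ g₂ (x + s) := by
            filter_upwards [eventually_gt_nhds (show -x < t by linarith)] with s hs
            exact (hgeq2 (x + s) (by linarith)).symm
          rw [hev2.deriv_eq, (hGaddt x t).deriv]
          simp [glueD, not_le.mpr (show (0:ℝ) < x + t by linarith)]
        exact (hg₂dec'.comp hadd).congr' hev
end

section
/- Let L > 0. Let f₁, g₁ : [−L,0] → ℂ, f₂, g₂ : [0,L] → ℂ and α₁⁽¹⁾, α₂⁽²⁾ : [0,∞) → ℂ be continuously differentiable and satisfy the compatibility conditions f₁(0) = f₂(0), f₁′(0) = f₂′(0), g₁(0) = g₂(0), g₁′(0) = g₂′(0), α₁⁽¹⁾(0) = f₁(−L), (α₁⁽¹⁾)′(0) = −f₁′(−L), α₂⁽²⁾(0) = g₂(L), (α₂⁽²⁾)′(0) = g₂′(L). Define, for x ∈ [−L,0] and t ≥ 0: Ψ₁⁽¹⁾(x,t) = f₁(x−t) if x−t ≥ −L and Ψ₁⁽¹⁾(x,t) = α₁⁽¹⁾(t−x−L)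 if x−t < −L; Ψ₂⁽¹⁾(x,t) = g₁(x+t) if x+t ≤ 0, Ψ₂⁽¹⁾(x,t) = g₂(x+t) if 0 < x+t ≤ L, and Ψ₂⁽¹⁾(x,t) = α₂⁽²⁾(x+t−L) if x+t > L; and, for x ∈ [0,L] and t ≥ 0: Ψ₁⁽²⁾(x,t) = f₂(x−t) if x−t ≥ 0, Ψ₁⁽²⁾(x,t) = f₁(x−t) if −L ≤ x−t < 0, and Ψ₁⁽²⁾(x,t) = α₁⁽¹⁾(t−x−L) if x−t < −L; Ψ₂⁽²⁾(x,t) = g₂(x+t) if x+t ≤ L and Ψ₂⁽²⁾(x,t) = α₂⁽²⁾(x+t−L) if x+t > L. Then these four functions are continuously differentiable, satisfy i ∂ₜΨ₁⁽ʲ⁾ = −i ∂ₓΨ₁⁽ʲ⁾ and i ∂ₜΨ₂⁽ʲ⁾ = i ∂ₓΨ₂⁽ʲ⁾ on their respective domains, take the initial values f₁, g₁, f₂, g₂ at t = 0, satisfy the interface continuity conditions Ψₗ⁽¹⁾(0,t) = Ψₗ⁽²⁾(0,t) (l = 1,2, t > 0), and satisfy the boundary conditions Ψ₁⁽¹⁾(−L,t)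 = α₁⁽¹⁾(t) and Ψ₂⁽²⁾(L,t) = α₂⁽²⁾(t) for t > 0. -/
open Filter Set

private lemma hasDerivAt_of_mem_nhds {u : ℝ → ℂ} {S : Set ℝ} {s : ℝ}
    (hu : ContDiffOn ℝ 1 u S) (hS : S ∈ nhds s) :
    HasDerivAt u (derivWithin u S s) s := by
  rw [derivWithin_of_mem_nhds hS]
  exact ((hu.contDiffAt hS).differentiableAt one_ne_zero).hasDerivAt

private lemma junction_ge {u v : ℝ → ℂ} {c : ℝ} {d : ℂ}
    (hu : HasDerivWithinAt u d (Iic c) c) (hv : HasDerivWithinAt v d (Ici c) c)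
    (huv : u c = v c) :
    HasDerivAt (fun s => if c ≤ s then v s else u s) d c := by
  have h1 : HasDerivWithinAt (fun s => if c ≤ s then v s else u s) d (Iic c) c := by
    refine hu.congr (fun x hx => ?_) (by rw [if_pos le_rfl, ← huv])
    by_cases h : c ≤ x
    · rw [if_pos h]; obtain rfl := le_antisymm hx h; exact huv.symm
    · rw [if_neg h]
  have h2 : HasDerivWithinAt (fun s => if c ≤ s then v s else u s) d (Ici c) c :=
    hv.congr (fun x hx => if_pos hx) (if_pos le_rfl)
  have h3 := h1.union h2
  rwa [Iic_union_Ici, hasDerivWithinAt_univ] at h3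

private lemma junction_le {u v : ℝ → ℂ} {c : ℝ} {d : ℂ}
    (hu : HasDerivWithinAt u d (Iic c) c) (hv : HasDerivWithinAt v d (Ici c) c)
    (huv : u c = v c) :
    HasDerivAt (fun s => if s ≤ c then u s else v s) d c := by
  have h1 : HasDerivWithinAt (fun s => if s ≤ c then u s else v s) d (Iic c) c :=
    hu.congr (fun x hx => if_pos hx) (if_pos le_rfl)
  have h2 : HasDerivWithinAt (fun s => if s ≤ c then u s else v s) d (Ici c) c := by
    refine hv.congr (fun x hx => ?_) (by rw [if_pos le_rfl, huv])
    by_cases h : x ≤ c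
    · rw [if_pos h]; obtain rfl := le_antisymm h hx; exact huv
    · rw [if_neg h]
  have h3 := h1.union h2
  rwa [Iic_union_Ici, hasDerivWithinAt_univ] at h3

private lemma contDiffOn_one_of_hasDerivWithinAt {F F' : ℝ → ℂ} {D : Set ℝ}
    (hD : UniqueDiffOn ℝ D)
    (h : ∀ x ∈ D, HasDerivWithinAt F (F' x) D x) (hc : ContinuousOn F' D) :
    ContDiffOn ℝ 1 F D := by
  have hdiff : DifferentiableOn ℝ F D := fun x hx => (h x hx).differentiableWithinAt
  have heq : ∀ x ∈ D, derivWithin F D x = F' x := fun x hx => (h x hx).derivWithin (hD x hx)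
  have : ContDiffOn ℝ (0 + 1) F D := by
    rw [contDiffOn_succ_iff_derivWithin hD]
    refine ⟨hdiff, by simp, ?_⟩
    rw [contDiffOn_zero]
    exact ContinuousOn.congr hc fun x hx => (heq x hx)
  simpa using this

private lemma glueIic {u v u' v' : ℝ → ℂ} {c b : ℝ} (hcb : c < b)
    (huf : ∀ s < c, HasDerivAt u (u' s) s)
    (huw : HasDerivWithinAt u (u' c) (Iic c) c)
    (huc : ContinuousOn u' (Iic c))
    (hv : ∀ s ∈ Icc c b, HasDerivWithinAt v (v' s) (Icc c b) s)
    (hvc : ContinuousOn v' (Icc c b))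
    (hval : u c = v c) (hder : u' c = v' c) :
    (∀ s < b, HasDerivAt (fun x => if c ≤ x then v x else u x)
        (if c ≤ s then v' s else u' s) s) ∧
    (∀ s ∈ Iic b, HasDerivWithinAt (fun x => if c ≤ x then v x else u x)
        (if c ≤ s then v' s else u' s) (Iic b) s) ∧
    ContinuousOn (fun s => if c ≤ s then v' s else u' s) (Iic b) := by
  set w : ℝ → ℂ := fun x => if c ≤ x then v x else u x with hw
  set w' : ℝ → ℂ := fun s => if c ≤ s then v' s else u' s with hw'
  have hfull : ∀ s < b, HasDerivAt w (w' s) s := by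
    intro s hsb
    rcases lt_trichotomy s c with hs | rfl | hs
    · have he : w =ᶠ[nhds s] u := by
        filter_upwards [Iio_mem_nhds hs] with x hx
        exact if_neg (not_le.2 hx)
      have : HasDerivAt w (u' s) s := (huf s hs).congr_of_eventuallyEq he
      simpa [hw', if_neg (not_le.2 hs)] using this
    · have hv' : HasDerivWithinAt v (u' s) (Ici s) s := by
        rw [hder]
        refine (hv s ⟨le_rfl, hcb.le⟩).mono_of_mem_nhdsWithin ?_
        rw [← Ici_inter_Iic]
        exact Filter.inter_mem self_mem_nhdsWithin
          (mem_nhdsWithin_of_mem_nhds (Iic_mem_nhds hcb))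
      have : HasDerivAt w (u' s) s := junction_ge huw hv' hval
      simpa [hw', if_pos le_rfl, hder] using this
    · have he : w =ᶠ[nhds s] v := by
        filter_upwards [Ioi_mem_nhds hs] with x hx
        exact if_pos (le_of_lt hx)
      have hvfull : HasDerivAt v (v' s) s :=
        (hv s ⟨hs.le, hsb.le⟩).hasDerivAt (Icc_mem_nhds hs hsb)
      have : HasDerivAt w (v' s) s := hvfull.congr_of_eventuallyEq he
      simpa [hw', if_pos hs.le] using this
  refine ⟨hfull, ?_, ?_⟩
  · intro s hs
    rcases lt_or_eq_of_le (mem_Iic.1 hs) with h | rfl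
    · exact (hfull s h).hasDerivWithinAt
    · have hb : HasDerivWithinAt v (v' s) (Iic s) s := by
        refine (hv s ⟨hcb.le, le_rfl⟩).mono_of_mem_nhdsWithin ?_
        rw [← Ici_inter_Iic, inter_comm]
        exact Filter.inter_mem self_mem_nhdsWithin
          (mem_nhdsWithin_of_mem_nhds (Ici_mem_nhds hcb))
      have he : w =ᶠ[nhdsWithin s (Iic s)] v := by
        filter_upwards [mem_nhdsWithin_of_mem_nhds (Ioi_mem_nhds hcb)] with x hx
        exact if_pos hx.le
      have : HasDerivWithinAt w (v' s) (Iic s) s :=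
        hb.congr_of_eventuallyEq he (if_pos hcb.le)
      simpa [hw', if_pos hcb.le] using this
  · refine ContinuousOn.if ?_ ?_ ?_
    · intro a ha
      have : a = c := by
        have := ha.2
        rwa [show {a : ℝ | c ≤ a} = Ici c from rfl, frontier_Ici, mem_singleton_iff] at this
      rw [this]; exact hder.symm
    · refine hvc.mono ?_
      rw [show {a : ℝ | c ≤ a} = Ici c from rfl, closure_Ici, inter_comm, Ici_inter_Iic]
    · refine huc.mono ?_
      rw [show {a : ℝ | ¬ c ≤ a} = Iio c by ext; simp, closure_Iio]
      exact inter_subset_right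

private lemma glueIci {u v u' v' : ℝ → ℂ} {a c : ℝ} (hac : a < c)
    (hu : ∀ s ∈ Icc a c, HasDerivWithinAt u (u' s) (Icc a c) s)
    (huc : ContinuousOn u' (Icc a c))
    (hvf : ∀ s, c < s → HasDerivAt v (v' s) s)
    (hvw : HasDerivWithinAt v (v' c) (Ici c) c)
    (hvc : ContinuousOn v' (Ici c))
    (hval : u c = v c) (hder : u' c = v' c) :
    (∀ s, a < s → HasDerivAt (fun x => if x ≤ c then u x else v x)
        (if s ≤ c then u' s else v' s) s) ∧
    (∀ s ∈ Ici a, HasDerivWithinAt (fun x => if x ≤ c then u x else v x)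
        (if s ≤ c then u' s else v' s) (Ici a) s) ∧
    ContinuousOn (fun s => if s ≤ c then u' s else v' s) (Ici a) := by
  set w : ℝ → ℂ := fun x => if x ≤ c then u x else v x with hw
  set w' : ℝ → ℂ := fun s => if s ≤ c then u' s else v' s with hw'
  have hfull : ∀ s, a < s → HasDerivAt w (w' s) s := by
    intro s hsa
    rcases lt_trichotomy s c with hs | rfl | hs
    · have he : w =ᶠ[nhds s] u := by
        filter_upwards [Iio_mem_nhds hs] with x hx
        exact if_pos hx.le
      have hufull : HasDerivAt u (u' s) s :=
        (hu s ⟨hsa.le, hs.le⟩).hasDerivAt (Icc_mem_nhds hsa hs)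
      have : HasDerivAt w (u' s) s := hufull.congr_of_eventuallyEq he
      simpa [hw', if_pos hs.le] using this
    · have hu' : HasDerivWithinAt u (v' s) (Iic s) s := by
        rw [← hder]
        refine (hu s ⟨hac.le, le_rfl⟩).mono_of_mem_nhdsWithin ?_
        rw [← Ici_inter_Iic, inter_comm]
        exact Filter.inter_mem self_mem_nhdsWithin
          (mem_nhdsWithin_of_mem_nhds (Ici_mem_nhds hac))
      have : HasDerivAt w (v' s) s := junction_le hu' hvw hval
      simpa [hw', if_pos le_rfl, hder] using this
    · have he : w =ᶠ[nhds s] v := by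
        filter_upwards [Ioi_mem_nhds hs] with x hx
        exact if_neg (not_le.2 hx)
      have : HasDerivAt w (v' s) s := (hvf s hs).congr_of_eventuallyEq he
      simpa [hw', if_neg (not_le.2 hs)] using this
  refine ⟨hfull, ?_, ?_⟩
  · intro s hs
    rcases lt_or_eq_of_le (mem_Ici.1 hs) with h | rfl
    · exact (hfull s h).hasDerivWithinAt
    · have hb : HasDerivWithinAt u (u' a) (Ici a) a := by
        refine (hu a ⟨le_rfl, hac.le⟩).mono_of_mem_nhdsWithin ?_
        rw [← Ici_inter_Iic]
        exact Filter.inter_mem self_mem_nhdsWithin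
          (mem_nhdsWithin_of_mem_nhds (Iic_mem_nhds hac))
      have he : w =ᶠ[nhdsWithin a (Ici a)] u := by
        filter_upwards [mem_nhdsWithin_of_mem_nhds (Iio_mem_nhds hac)] with x hx
        exact if_pos hx.le
      have : HasDerivWithinAt w (u' a) (Ici a) a :=
        hb.congr_of_eventuallyEq he (if_pos hac.le)
      simpa [hw', if_pos hac.le] using this
  · refine ContinuousOn.if ?_ ?_ ?_
    · intro x hx
      have : x = c := by
        have := hx.2
        rwa [show {a : ℝ | a ≤ c} = Iic c from rfl, frontier_Iic, mem_singleton_iff] at this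
      rw [this]; exact hder
    · refine huc.mono ?_
      rw [show {a : ℝ | a ≤ c} = Iic c from rfl, closure_Iic, Ici_inter_Iic]
    · refine hvc.mono ?_
      rw [show {a : ℝ | ¬ a ≤ c} = Ioi c by ext; simp, closure_Ioi]
      exact inter_subset_right



open Filter

/-- Verification of the explicit solution of the massless Dirac interface problem on the
two finite domains `[-L,0]` and `[0,L]`: the piecewise transport waves built from
compatible `C¹` initial data `f₁, g₁, f₂, g₂` and boundary data `a₁ = α₁⁽¹⁾` (at `x=-L`)
and `a₂ = α₂⁽²⁾` (at `x=L`) are continuously differentiable, solve the two transport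
equations, take the prescribed initial values, are continuous across the interface
`x = 0`, and take the prescribed boundary values. -/
theorem massless_dirac_interface_solution_finite
    (L : ℝ) (hL : 0 < L)
    (f₁ g₁ f₂ g₂ a₁ a₂ : ℝ → ℂ)
    (hf₁ : ContDiffOn ℝ 1 f₁ (Set.Icc (-L) 0)) (hg₁ : ContDiffOn ℝ 1 g₁ (Set.Icc (-L) 0))
    (hf₂ : ContDiffOn ℝ 1 f₂ (Set.Icc 0 L)) (hg₂ : ContDiffOn ℝ 1 g₂ (Set.Icc 0 L))
    (ha₁ : ContDiffOn ℝ 1 a₁ (Set.Ici 0)) (ha₂ : ContDiffOn ℝ 1 a₂ (Set.Ici 0))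
    (hf0 : f₁ 0 = f₂ 0)
    (hf0' : derivWithin f₁ (Set.Icc (-L) 0) 0 = derivWithin f₂ (Set.Icc 0 L) 0)
    (hg0 : g₁ 0 = g₂ 0)
    (hg0' : derivWithin g₁ (Set.Icc (-L) 0) 0 = derivWithin g₂ (Set.Icc 0 L) 0)
    (ha₁0 : a₁ 0 = f₁ (-L))
    (ha₁0' : derivWithin a₁ (Set.Ici 0) 0 = -derivWithin f₁ (Set.Icc (-L) 0) (-L))
    (ha₂0 : a₂ 0 = g₂ L)
    (ha₂0' : derivWithin a₂ (Set.Ici 0) 0 = derivWithin g₂ (Set.Icc 0 L) L)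
    (Ψ₁₁ Ψ₂₁ Ψ₁₂ Ψ₂₂ : ℝ × ℝ → ℂ)
    (hΨ₁₁ : ∀ x t : ℝ, Ψ₁₁ (x, t) =
      if -L ≤ x - t then f₁ (x - t) else a₁ (t - x - L))
    (hΨ₂₁ : ∀ x t : ℝ, Ψ₂₁ (x, t) =
      if x + t ≤ 0 then g₁ (x + t)
      else if x + t ≤ L then g₂ (x + t) else a₂ (x + t - L))
    (hΨ₁₂ : ∀ x t : ℝ, Ψ₁₂ (x, t) =
      if 0 ≤ x - t then f₂ (x - t)
      else if -L ≤ x - t then f₁ (x - t) else a₁ (t - x - L))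
    (hΨ₂₂ : ∀ x t : ℝ, Ψ₂₂ (x, t) =
      if x + t ≤ L then g₂ (x + t) else a₂ (x + t - L)) :
    -- continuous differentiability on the two space-time domains
    (ContDiffOn ℝ 1 Ψ₁₁ (Set.Icc (-L) 0 ×ˢ Set.Ici 0) ∧
     ContDiffOn ℝ 1 Ψ₂₁ (Set.Icc (-L) 0 ×ˢ Set.Ici 0) ∧
     ContDiffOn ℝ 1 Ψ₁₂ (Set.Icc 0 L ×ˢ Set.Ici 0) ∧
     ContDiffOn ℝ 1 Ψ₂₂ (Set.Icc 0 L ×ˢ Set.Ici 0)) ∧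
    -- the transport equations of the massless Dirac system
    (∀ x ∈ Set.Ioo (-L) (0:ℝ), ∀ t > (0:ℝ),
      Complex.I * deriv (fun s : ℝ => Ψ₁₁ (x, s)) t =
        -Complex.I * deriv (fun y : ℝ => Ψ₁₁ (y, t)) x ∧
      Complex.I * deriv (fun s : ℝ => Ψ₂₁ (x, s)) t =
        Complex.I * deriv (fun y : ℝ => Ψ₂₁ (y, t)) x) ∧
    (∀ x ∈ Set.Ioo (0:ℝ) L, ∀ t > (0:ℝ),
      Complex.I * deriv (fun s : ℝ => Ψ₁₂ (x, s)) t =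
        -Complex.I * deriv (fun y : ℝ => Ψ₁₂ (y, t)) x ∧
      Complex.I * deriv (fun s : ℝ => Ψ₂₂ (x, s)) t =
        Complex.I * deriv (fun y : ℝ => Ψ₂₂ (y, t)) x) ∧
    -- initial conditions
    (∀ x ∈ Set.Icc (-L) (0:ℝ), Ψ₁₁ (x, 0) = f₁ x ∧ Ψ₂₁ (x, 0) = g₁ x) ∧
    (∀ x ∈ Set.Icc (0:ℝ) L, Ψ₁₂ (x, 0) = f₂ x ∧ Ψ₂₂ (x, 0) = g₂ x) ∧
    -- interface continuity at x = 0
    (∀ t > (0:ℝ), Ψ₁₁ (0, t) = Ψ₁₂ (0, t) ∧ Ψ₂₁ (0, t) = Ψ₂₂ (0, t)) ∧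
    -- boundary conditions at x = -L and x = L
    (∀ t > (0:ℝ), Ψ₁₁ (-L, t) = a₁ t ∧ Ψ₂₂ (L, t) = a₂ t) := by
  
  classical
  have hL0 : (-L : ℝ) < 0 := by linarith
  -- derivative data for the six given functions
  have hvf₁ : ∀ s ∈ Set.Icc (-L) 0, HasDerivWithinAt f₁
      (derivWithin f₁ (Set.Icc (-L) 0) s) (Set.Icc (-L) 0) s :=
    fun s hs => (hf₁.differentiableOn one_ne_zero s hs).hasDerivWithinAt
  have hcf₁ : ContinuousOn (derivWithin f₁ (Set.Icc (-L) 0)) (Set.Icc (-L) 0) :=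
    hf₁.continuousOn_derivWithin (uniqueDiffOn_Icc hL0) le_rfl
  have hvg₁ : ∀ s ∈ Set.Icc (-L) 0, HasDerivWithinAt g₁
      (derivWithin g₁ (Set.Icc (-L) 0) s) (Set.Icc (-L) 0) s :=
    fun s hs => (hg₁.differentiableOn one_ne_zero s hs).hasDerivWithinAt
  have hcg₁ : ContinuousOn (derivWithin g₁ (Set.Icc (-L) 0)) (Set.Icc (-L) 0) :=
    hg₁.continuousOn_derivWithin (uniqueDiffOn_Icc hL0) le_rfl
  have hvf₂ : ∀ s ∈ Set.Icc 0 L, HasDerivWithinAt f₂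
      (derivWithin f₂ (Set.Icc 0 L) s) (Set.Icc 0 L) s :=
    fun s hs => (hf₂.differentiableOn one_ne_zero s hs).hasDerivWithinAt
  have hcf₂ : ContinuousOn (derivWithin f₂ (Set.Icc 0 L)) (Set.Icc 0 L) :=
    hf₂.continuousOn_derivWithin (uniqueDiffOn_Icc hL) le_rfl
  have hvg₂ : ∀ s ∈ Set.Icc 0 L, HasDerivWithinAt g₂
      (derivWithin g₂ (Set.Icc 0 L) s) (Set.Icc 0 L) s :=
    fun s hs => (hg₂.differentiableOn one_ne_zero s hs).hasDerivWithinAt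
  have hcg₂ : ContinuousOn (derivWithin g₂ (Set.Icc 0 L)) (Set.Icc 0 L) :=
    hg₂.continuousOn_derivWithin (uniqueDiffOn_Icc hL) le_rfl
  have hca₁ : ContinuousOn (derivWithin a₁ (Set.Ici 0)) (Set.Ici 0) :=
    ha₁.continuousOn_derivWithin (uniqueDiffOn_Ici 0) le_rfl
  have hca₂ : ContinuousOn (derivWithin a₂ (Set.Ici 0)) (Set.Ici 0) :=
    ha₂.continuousOn_derivWithin (uniqueDiffOn_Ici 0) le_rfl
  -- the left extension piece A₁ : s ↦ a₁ (-s - L)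
  have hA₁f : ∀ s < (-L : ℝ), HasDerivAt (fun x => a₁ (-x - L))
      (-(derivWithin a₁ (Set.Ici 0) (-s - L))) s := by
    intro s hs
    have houter : HasDerivAt a₁ (derivWithin a₁ (Set.Ici 0) (-s - L)) (-s - L) :=
      hasDerivAt_of_mem_nhds ha₁ (Ici_mem_nhds (by linarith))
    have hinner : HasDerivAt (fun x : ℝ => -x - L) (-1) s := by
      simpa using ((hasDerivAt_id s).neg.sub_const L)
    have h := houter.scomp_of_eq s hinner rfl
    simpa [Function.comp_def] using h
  have hA₁w : HasDerivWithinAt (fun x => a₁ (-x - L))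
      (-(derivWithin a₁ (Set.Ici 0) (-(-L) - L))) (Set.Iic (-L)) (-L) := by
    rw [show (-(-L) - L : ℝ) = 0 by ring]
    have houter : HasDerivWithinAt a₁ (derivWithin a₁ (Set.Ici 0) 0) (Set.Ici 0) 0 :=
      (ha₁.differentiableOn one_ne_zero 0 Set.self_mem_Ici).hasDerivWithinAt
    have hinner : HasDerivWithinAt (fun x : ℝ => -x - L) (-1) (Set.Iic (-L)) (-L) := by
      have := ((hasDerivAt_id (-L)).neg.sub_const L).hasDerivWithinAt
        (s := Set.Iic (-L))
      simpa using this
    have hmaps : Set.MapsTo (fun x : ℝ => -x - L) (Set.Iic (-L)) (Set.Ici 0) := by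
      intro x hx
      simp only [Set.mem_Iic, Set.mem_Ici] at *
      linarith
    have h := houter.scomp_of_eq (-L) hinner hmaps (by norm_num)
    simpa [Function.comp_def] using h
  have hA₁c : ContinuousOn (fun s => -(derivWithin a₁ (Set.Ici 0) (-s - L)))
      (Set.Iic (-L)) := by
    have hmaps : Set.MapsTo (fun x : ℝ => -x - L) (Set.Iic (-L)) (Set.Ici 0) := by
      intro x hx
      simp only [Set.mem_Iic, Set.mem_Ici] at *
      linarith
    have h := hca₁.comp ((Continuous.continuousOn (by fun_prop) :
      ContinuousOn (fun x : ℝ => -x - L) (Set.Iic (-L)))) hmaps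
    exact (by simpa [Function.comp_def] using h :
      ContinuousOn (fun x => derivWithin a₁ (Set.Ici 0) (-x - L)) (Set.Iic (-L))).neg
  -- the right extension piece A₂ : s ↦ a₂ (s - L)
  have hA₂f : ∀ s, L < s → HasDerivAt (fun x => a₂ (x - L))
      (derivWithin a₂ (Set.Ici 0) (s - L)) s := by
    intro s hs
    have houter : HasDerivAt a₂ (derivWithin a₂ (Set.Ici 0) (s - L)) (s - L) :=
      hasDerivAt_of_mem_nhds ha₂ (Ici_mem_nhds (by linarith))
    have hinner : HasDerivAt (fun x : ℝ => x - L) 1 s := by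
      simpa using ((hasDerivAt_id s).sub_const L)
    have h := houter.scomp_of_eq s hinner rfl
    simpa [Function.comp_def] using h
  have hA₂w : HasDerivWithinAt (fun x => a₂ (x - L))
      (derivWithin a₂ (Set.Ici 0) (L - L)) (Set.Ici L) L := by
    rw [show (L - L : ℝ) = 0 by ring]
    have houter : HasDerivWithinAt a₂ (derivWithin a₂ (Set.Ici 0) 0) (Set.Ici 0) 0 :=
      (ha₂.differentiableOn one_ne_zero 0 Set.self_mem_Ici).hasDerivWithinAt
    have hinner : HasDerivWithinAt (fun x : ℝ => x - L) 1 (Set.Ici L) L := by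
      have := ((hasDerivAt_id L).sub_const L).hasDerivWithinAt (s := Set.Ici L)
      simpa using this
    have hmaps : Set.MapsTo (fun x : ℝ => x - L) (Set.Ici L) (Set.Ici 0) := by
      intro x hx
      simp only [Set.mem_Ici] at *
      linarith
    have h := houter.scomp_of_eq L hinner hmaps (by norm_num)
    simpa [Function.comp_def] using h
  have hA₂c : ContinuousOn (fun s => derivWithin a₂ (Set.Ici 0) (s - L))
      (Set.Ici L) := by
    have hmaps : Set.MapsTo (fun x : ℝ => x - L) (Set.Ici L) (Set.Ici 0) := by
      intro x hx
      simp only [Set.mem_Ici] at *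
      linarith
    have h := hca₂.comp ((Continuous.continuousOn (by fun_prop) :
      ContinuousOn (fun x : ℝ => x - L) (Set.Ici L))) hmaps
    simpa [Function.comp_def] using h
  -- glue W₁ on Iic 0
  have hval₁ : (fun x => a₁ (-x - L)) (-L) = f₁ (-L) := by
    simp only []
    rw [show (-(-L) - L : ℝ) = 0 by ring]
    exact ha₁0
  have hder₁ : (fun s => -(derivWithin a₁ (Set.Ici 0) (-s - L))) (-L)
      = derivWithin f₁ (Set.Icc (-L) 0) (-L) := by
    simp only []
    rw [show (-(-L) - L : ℝ) = 0 by ring, ha₁0', neg_neg]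
  obtain ⟨hW₁f, hW₁w, hW₁c⟩ :=
    glueIic (u := fun x => a₁ (-x - L)) (v := f₁)
      (u' := fun s => -(derivWithin a₁ (Set.Ici 0) (-s - L)))
      (v' := derivWithin f₁ (Set.Icc (-L) 0))
      hL0 hA₁f hA₁w hA₁c hvf₁ hcf₁ hval₁ hder₁
  -- glue W₂ on Iic L
  have hval₂ : (fun x => if -L ≤ x then f₁ x else a₁ (-x - L)) 0 = f₂ 0 := by
    simp only []
    rw [if_pos (by linarith : (-L : ℝ) ≤ 0)]
    exact hf0
  have hder₂ : (fun s => if -L ≤ s then derivWithin f₁ (Set.Icc (-L) 0) s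
      else -(derivWithin a₁ (Set.Ici 0) (-s - L))) 0 = derivWithin f₂ (Set.Icc 0 L) 0 := by
    simp only []
    rw [if_pos (by linarith : (-L : ℝ) ≤ 0)]
    exact hf0'
  obtain ⟨hW₂f, hW₂w, hW₂c⟩ :=
    glueIic (u := fun x => if -L ≤ x then f₁ x else a₁ (-x - L)) (v := f₂)
      (u' := fun s => if -L ≤ s then derivWithin f₁ (Set.Icc (-L) 0) s
        else -(derivWithin a₁ (Set.Ici 0) (-s - L)))
      (v' := derivWithin f₂ (Set.Icc 0 L))
      hL hW₁f (hW₁w 0 Set.self_mem_Iic) hW₁c hvf₂ hcf₂ hval₂ hder₂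
  -- glue V₂ on Ici 0
  have hval₃ : g₂ L = (fun x => a₂ (x - L)) L := by
    simp only []
    rw [show (L - L : ℝ) = 0 by ring]
    exact ha₂0.symm
  have hder₃ : derivWithin g₂ (Set.Icc 0 L) L
      = (fun s => derivWithin a₂ (Set.Ici 0) (s - L)) L := by
    simp only []
    rw [show (L - L : ℝ) = 0 by ring]
    exact ha₂0'.symm
  obtain ⟨hV₂f, hV₂w, hV₂c⟩ :=
    glueIci (u := g₂) (v := fun x => a₂ (x - L))
      (u' := derivWithin g₂ (Set.Icc 0 L))
      (v' := fun s => derivWithin a₂ (Set.Ici 0) (s - L))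
      hL hvg₂ hcg₂ hA₂f hA₂w hA₂c hval₃ hder₃
  -- glue V₁ on Ici (-L)
  have hval₄ : g₁ 0 = (fun x => if x ≤ L then g₂ x else a₂ (x - L)) 0 := by
    simp only []
    rw [if_pos hL.le]
    exact hg0
  have hder₄ : derivWithin g₁ (Set.Icc (-L) 0) 0
      = (fun s => if s ≤ L then derivWithin g₂ (Set.Icc 0 L) s
        else derivWithin a₂ (Set.Ici 0) (s - L)) 0 := by
    simp only []
    rw [if_pos hL.le]
    exact hg0'
  obtain ⟨hV₁f, hV₁w, hV₁c⟩ :=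
    glueIci (u := g₁) (v := fun x => if x ≤ L then g₂ x else a₂ (x - L))
      (u' := derivWithin g₁ (Set.Icc (-L) 0))
      (v' := fun s => if s ≤ L then derivWithin g₂ (Set.Icc 0 L) s
        else derivWithin a₂ (Set.Ici 0) (s - L))
      hL0 hvg₁ hcg₁ hV₂f (hV₂w 0 Set.self_mem_Ici) hV₂c hval₄ hder₄
  -- 1-D regularity
  have hW₁cd : ContDiffOn ℝ 1 (fun x => if -L ≤ x then f₁ x else a₁ (-x - L))
      (Set.Iic 0) :=
    contDiffOn_one_of_hasDerivWithinAt (uniqueDiffOn_Iic 0) hW₁w hW₁c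
  have hW₂cd : ContDiffOn ℝ 1
      (fun x => if 0 ≤ x then f₂ x else if -L ≤ x then f₁ x else a₁ (-x - L))
      (Set.Iic L) :=
    contDiffOn_one_of_hasDerivWithinAt (uniqueDiffOn_Iic L) hW₂w hW₂c
  have hV₂cd : ContDiffOn ℝ 1 (fun x => if x ≤ L then g₂ x else a₂ (x - L))
      (Set.Ici 0) :=
    contDiffOn_one_of_hasDerivWithinAt (uniqueDiffOn_Ici 0) hV₂w hV₂c
  have hV₁cd : ContDiffOn ℝ 1
      (fun x => if x ≤ 0 then g₁ x else if x ≤ L then g₂ x else a₂ (x - L))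
      (Set.Ici (-L)) :=
    contDiffOn_one_of_hasDerivWithinAt (uniqueDiffOn_Ici (-L)) hV₁w hV₁c
  -- identification of the four waves with 1-D profiles
  have hE₁₁ : Ψ₁₁ = fun p : ℝ × ℝ =>
      (fun x => if -L ≤ x then f₁ x else a₁ (-x - L)) (p.1 - p.2) := by
    funext p
    obtain ⟨x, t⟩ := p
    rw [hΨ₁₁ x t]
    simp only []
    by_cases h : -L ≤ x - t
    · rw [if_pos h, if_pos h]
    · rw [if_neg h, if_neg h]
      congr 1
      ring
  have hE₁₂ : Ψ₁₂ = fun p : ℝ × ℝ =>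
      (fun x => if 0 ≤ x then f₂ x else if -L ≤ x then f₁ x else a₁ (-x - L))
        (p.1 - p.2) := by
    funext p
    obtain ⟨x, t⟩ := p
    rw [hΨ₁₂ x t]
    simp only []
    by_cases h : (0:ℝ) ≤ x - t
    · rw [if_pos h, if_pos h]
    · rw [if_neg h, if_neg h]
      by_cases h' : -L ≤ x - t
      · rw [if_pos h', if_pos h']
      · rw [if_neg h', if_neg h']
        congr 1
        ring
  have hE₂₁ : Ψ₂₁ = fun p : ℝ × ℝ =>
      (fun x => if x ≤ 0 then g₁ x else if x ≤ L then g₂ x else a₂ (x - L))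
        (p.1 + p.2) := by
    funext p
    obtain ⟨x, t⟩ := p
    rw [hΨ₂₁ x t]
  have hE₂₂ : Ψ₂₂ = fun p : ℝ × ℝ =>
      (fun x => if x ≤ L then g₂ x else a₂ (x - L)) (p.1 + p.2) := by
    funext p
    obtain ⟨x, t⟩ := p
    rw [hΨ₂₂ x t]
  have hsub : ContDiff ℝ 1 (fun p : ℝ × ℝ => p.1 - p.2) := contDiff_fst.sub contDiff_snd
  have hadd : ContDiff ℝ 1 (fun p : ℝ × ℝ => p.1 + p.2) := contDiff_fst.add contDiff_snd
  refine ⟨⟨?_, ?_, ?_, ?_⟩, ?_, ?_, ?_, ?_, ?_, ?_⟩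
  · rw [hE₁₁]
    refine hW₁cd.comp hsub.contDiffOn ?_
    rintro ⟨x, t⟩ ⟨hx, ht⟩
    have h1 := hx.2
    have h2 := Set.mem_Ici.1 ht
    simp only [Set.mem_Iic]
    linarith
  · rw [hE₂₁]
    refine hV₁cd.comp hadd.contDiffOn ?_
    rintro ⟨x, t⟩ ⟨hx, ht⟩
    have h1 := hx.1
    have h2 := Set.mem_Ici.1 ht
    simp only [Set.mem_Ici]
    linarith
  · rw [hE₁₂]
    refine hW₂cd.comp hsub.contDiffOn ?_
    rintro ⟨x, t⟩ ⟨hx, ht⟩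
    have h1 := hx.2
    have h2 := Set.mem_Ici.1 ht
    simp only [Set.mem_Iic]
    linarith
  · rw [hE₂₂]
    refine hV₂cd.comp hadd.contDiffOn ?_
    rintro ⟨x, t⟩ ⟨hx, ht⟩
    have h1 := hx.1
    have h2 := Set.mem_Ici.1 ht
    simp only [Set.mem_Ici]
    linarith
  -- transport equations on (-L, 0)
  · intro x hx t ht
    obtain ⟨hx1, hx2⟩ := hx
    constructor
    · have hxt : x - t < 0 := by linarith
      have hinner_t : HasDerivAt (fun s : ℝ => x - s) (-1) t := by
        simpa using (hasDerivAt_id t).const_sub x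
      have hinner_x : HasDerivAt (fun y : ℝ => y - t) 1 x := by
        simpa using (hasDerivAt_id x).sub_const t
      have hdt : HasDerivAt (fun s => Ψ₁₁ (x, s))
          (-((fun s => if -L ≤ s then derivWithin f₁ (Set.Icc (-L) 0) s
            else -(derivWithin a₁ (Set.Ici 0) (-s - L))) (x - t))) t := by
        have h := (hW₁f (x - t) hxt).scomp_of_eq t hinner_t rfl
        rw [neg_one_smul ℝ] at h
        rw [hE₁₁]
        exact h
      have hdx : HasDerivAt (fun y => Ψ₁₁ (y, t))
          ((fun s => if -L ≤ s then derivWithin f₁ (Set.Icc (-L) 0) s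
            else -(derivWithin a₁ (Set.Ici 0) (-s - L))) (x - t)) x := by
        have h := (hW₁f (x - t) hxt).scomp_of_eq x hinner_x rfl
        rw [hE₁₁]
        simpa [Function.comp_def] using h
      rw [hdt.deriv, hdx.deriv]
      ring
    · have hxt : -L < x + t := by linarith
      have hinner_t : HasDerivAt (fun s : ℝ => x + s) 1 t := by
        simpa using (hasDerivAt_id t).const_add x
      have hinner_x : HasDerivAt (fun y : ℝ => y + t) 1 x := by
        simpa using (hasDerivAt_id x).add_const t
      have hdt : HasDerivAt (fun s => Ψ₂₁ (x, s))
          ((fun s => if s ≤ 0 then derivWithin g₁ (Set.Icc (-L) 0) s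
            else if s ≤ L then derivWithin g₂ (Set.Icc 0 L) s
            else derivWithin a₂ (Set.Ici 0) (s - L)) (x + t)) t := by
        have h := (hV₁f (x + t) hxt).scomp_of_eq t hinner_t rfl
        rw [hE₂₁]
        simpa [Function.comp_def] using h
      have hdx : HasDerivAt (fun y => Ψ₂₁ (y, t))
          ((fun s => if s ≤ 0 then derivWithin g₁ (Set.Icc (-L) 0) s
            else if s ≤ L then derivWithin g₂ (Set.Icc 0 L) s
            else derivWithin a₂ (Set.Ici 0) (s - L)) (x + t)) x := by
        have h := (hV₁f (x + t) hxt).scomp_of_eq x hinner_x rfl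
        rw [hE₂₁]
        simpa [Function.comp_def] using h
      rw [hdt.deriv, hdx.deriv]
  -- transport equations on (0, L)
  · intro x hx t ht
    obtain ⟨hx1, hx2⟩ := hx
    constructor
    · have hxt : x - t < L := by linarith
      have hinner_t : HasDerivAt (fun s : ℝ => x - s) (-1) t := by
        simpa using (hasDerivAt_id t).const_sub x
      have hinner_x : HasDerivAt (fun y : ℝ => y - t) 1 x := by
        simpa using (hasDerivAt_id x).sub_const t
      have hdt : HasDerivAt (fun s => Ψ₁₂ (x, s))
          (-((fun s => if 0 ≤ s then derivWithin f₂ (Set.Icc 0 L) s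
            else if -L ≤ s then derivWithin f₁ (Set.Icc (-L) 0) s
            else -(derivWithin a₁ (Set.Ici 0) (-s - L))) (x - t))) t := by
        have h := (hW₂f (x - t) hxt).scomp_of_eq t hinner_t rfl
        rw [neg_one_smul ℝ] at h
        rw [hE₁₂]
        exact h
      have hdx : HasDerivAt (fun y => Ψ₁₂ (y, t))
          ((fun s => if 0 ≤ s then derivWithin f₂ (Set.Icc 0 L) s
            else if -L ≤ s then derivWithin f₁ (Set.Icc (-L) 0) s
            else -(derivWithin a₁ (Set.Ici 0) (-s - L))) (x - t)) x := by
        have h := (hW₂f (x - t) hxt).scomp_of_eq x hinner_x rfl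
        rw [hE₁₂]
        simpa [Function.comp_def] using h
      rw [hdt.deriv, hdx.deriv]
      ring
    · have hxt : (0:ℝ) < x + t := by linarith
      have hinner_t : HasDerivAt (fun s : ℝ => x + s) 1 t := by
        simpa using (hasDerivAt_id t).const_add x
      have hinner_x : HasDerivAt (fun y : ℝ => y + t) 1 x := by
        simpa using (hasDerivAt_id x).add_const t
      have hdt : HasDerivAt (fun s => Ψ₂₂ (x, s))
          ((fun s => if s ≤ L then derivWithin g₂ (Set.Icc 0 L) s
            else derivWithin a₂ (Set.Ici 0) (s - L)) (x + t)) t := by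
        have h := (hV₂f (x + t) hxt).scomp_of_eq t hinner_t rfl
        rw [hE₂₂]
        simpa [Function.comp_def] using h
      have hdx : HasDerivAt (fun y => Ψ₂₂ (y, t))
          ((fun s => if s ≤ L then derivWithin g₂ (Set.Icc 0 L) s
            else derivWithin a₂ (Set.Ici 0) (s - L)) (x + t)) x := by
        have h := (hV₂f (x + t) hxt).scomp_of_eq x hinner_x rfl
        rw [hE₂₂]
        simpa [Function.comp_def] using h
      rw [hdt.deriv, hdx.deriv]
  -- initial conditions on [-L, 0]
  · intro x hx
    constructor
    · rw [hΨ₁₁ x 0, if_pos (by linarith [hx.1] : -L ≤ x - 0)]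
      norm_num
    · rw [hΨ₂₁ x 0, if_pos (by linarith [hx.2] : x + 0 ≤ 0)]
      norm_num
  -- initial conditions on [0, L]
  · intro x hx
    constructor
    · rw [hΨ₁₂ x 0, if_pos (by linarith [hx.1] : (0:ℝ) ≤ x - 0)]
      norm_num
    · rw [hΨ₂₂ x 0, if_pos (by linarith [hx.2] : x + 0 ≤ L)]
      norm_num
  -- interface continuity
  · intro t ht
    constructor
    · rw [hΨ₁₁ 0 t, hΨ₁₂ 0 t, if_neg (by linarith : ¬ (0:ℝ) ≤ 0 - t)]
    · rw [hΨ₂₁ 0 t, hΨ₂₂ 0 t, if_neg (by linarith : ¬ (0:ℝ) + t ≤ 0)]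
  -- boundary values
  · intro t ht
    constructor
    · rw [hΨ₁₁ (-L) t, if_neg (by linarith : ¬ -L ≤ -L - t),
        show t - -L - L = t by ring]
    · rw [hΨ₂₂ L t, if_neg (by linarith : ¬ L + t ≤ L),
        show L + t - L = t by ring]
end

section
/- Let m > 0 and let Ψ₁, Ψ₂ : U → ℂ be continuously differentiable on an open set U ⊆ ℝ² (coordinates (x,t)) satisfying i ∂ₜΨ₁ = −i ∂ₓΨ₁ + m Ψ₂ and i ∂ₜΨ₂ = i ∂ₓΨ₂ + m Ψ₁ on U. Then for every k ∈ ℂ and every Ω ∈ ℂ with Ω² = −(k² + m²), the identity ∂ₜ( e^{−ikx+Ωt} [ i m Ψ₁(x,t) + (Ω − ik) Ψ₂(x,t) ] ) = ∂ₓ( e^{−ikx+Ωt} [ −i m Ψ₁(x,t) + (Ω − ik) Ψ₂(x,t) ] ) holds at every point (x,t) ∈ U. -/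
/-- The local (divergence-form) relation for the one-dimensional massive Dirac system:
for any continuously differentiable solution on an open set `U ⊆ ℝ²` and any branch
`Ω` of the dispersion relation (`Ω² = -(k² + m²)`), the stated identity between the
`t`-derivative and the `x`-derivative holds at every point of `U`. -/
theorem massive_dirac_local_relation
    (m : ℝ) (hm : 0 < m) (U : Set (ℝ × ℝ)) (hU : IsOpen U)
    (Ψ₁ Ψ₂ : ℝ × ℝ → ℂ)
    (hΨ₁ : ContDiffOn ℝ 1 Ψ₁ U) (hΨ₂ : ContDiffOn ℝ 1 Ψ₂ U)
    (pde₁ : ∀ p ∈ U, Complex.I * deriv (fun s : ℝ => Ψ₁ (p.1, s)) p.2 =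
        -Complex.I * deriv (fun y : ℝ => Ψ₁ (y, p.2)) p.1 + m * Ψ₂ p)
    (pde₂ : ∀ p ∈ U, Complex.I * deriv (fun s : ℝ => Ψ₂ (p.1, s)) p.2 =
        Complex.I * deriv (fun y : ℝ => Ψ₂ (y, p.2)) p.1 + m * Ψ₁ p) :
    ∀ (k Ω : ℂ), Ω ^ 2 = -(k ^ 2 + m ^ 2) → ∀ p ∈ U,
      deriv (fun s : ℝ => Complex.exp (-Complex.I * k * p.1 + Ω * s) *
          (Complex.I * m * Ψ₁ (p.1, s) + (Ω - Complex.I * k) * Ψ₂ (p.1, s))) p.2 =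
      deriv (fun y : ℝ => Complex.exp (-Complex.I * k * y + Ω * p.2) *
          (-(Complex.I * m) * Ψ₁ (y, p.2) + (Ω - Complex.I * k) * Ψ₂ (y, p.2))) p.1 := by
  rintro k Ω hΩ ⟨x, t⟩ hp
  have hp1 := pde₁ (x, t) hp
  have hp2 := pde₂ (x, t) hp
  dsimp only at hp1 hp2 ⊢
  have hpU : U ∈ nhds ((x, t) : ℝ × ℝ) := hU.mem_nhds hp
  have h1 : DifferentiableAt ℝ Ψ₁ (x, t) :=
    (hΨ₁.differentiableOn one_ne_zero).differentiableAt hpU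
  have h2 : DifferentiableAt ℝ Ψ₂ (x, t) :=
    (hΨ₂.differentiableOn one_ne_zero).differentiableAt hpU
  have hlt : DifferentiableAt ℝ (fun s : ℝ => ((x, s) : ℝ × ℝ)) t :=
    (differentiableAt_const x).prodMk differentiableAt_id
  have hlx : DifferentiableAt ℝ (fun y : ℝ => ((y, t) : ℝ × ℝ)) x :=
    differentiableAt_id.prodMk (differentiableAt_const t)
  have hA : HasDerivAt (fun s : ℝ => Ψ₁ (x, s)) (deriv (fun s : ℝ => Ψ₁ (x, s)) t) t :=
    (DifferentiableAt.comp t h1 hlt : DifferentiableAt ℝ (fun s : ℝ => Ψ₁ (x, s)) t).hasDerivAt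
  have hB : HasDerivAt (fun s : ℝ => Ψ₂ (x, s)) (deriv (fun s : ℝ => Ψ₂ (x, s)) t) t :=
    (DifferentiableAt.comp t h2 hlt : DifferentiableAt ℝ (fun s : ℝ => Ψ₂ (x, s)) t).hasDerivAt
  have hC : HasDerivAt (fun y : ℝ => Ψ₁ (y, t)) (deriv (fun y : ℝ => Ψ₁ (y, t)) x) x :=
    (DifferentiableAt.comp x h1 hlx : DifferentiableAt ℝ (fun y : ℝ => Ψ₁ (y, t)) x).hasDerivAt
  have hD : HasDerivAt (fun y : ℝ => Ψ₂ (y, t)) (deriv (fun y : ℝ => Ψ₂ (y, t)) x) x :=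
    (DifferentiableAt.comp x h2 hlx : DifferentiableAt ℝ (fun y : ℝ => Ψ₂ (y, t)) x).hasDerivAt
  set a := deriv (fun s : ℝ => Ψ₁ (x, s)) t
  set b := deriv (fun s : ℝ => Ψ₂ (x, s)) t
  set c := deriv (fun y : ℝ => Ψ₁ (y, t)) x
  set d := deriv (fun y : ℝ => Ψ₂ (y, t)) x
  have hcoe : ∀ r : ℝ, HasDerivAt (fun s : ℝ => (s : ℂ)) 1 r := fun r => by
    simpa using (hasDerivAt_id r).ofReal_comp
  have hexpT : HasDerivAt (fun s : ℝ => Complex.exp (-Complex.I * k * x + Ω * s))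
      (Complex.exp (-Complex.I * k * x + Ω * t) * Ω) t := by
    simpa using (((hcoe t).const_mul Ω).const_add (-Complex.I * k * x)).cexp
  have hexpX : HasDerivAt (fun y : ℝ => Complex.exp (-Complex.I * k * y + Ω * t))
      (Complex.exp (-Complex.I * k * x + Ω * t) * (-Complex.I * k)) x := by
    simpa using (((hcoe x).const_mul (-Complex.I * k)).add_const (Ω * t)).cexp
  have hGt : HasDerivAt
      (fun s : ℝ => Complex.I * m * Ψ₁ (x, s) + (Ω - Complex.I * k) * Ψ₂ (x, s))
      (Complex.I * m * a + (Ω - Complex.I * k) * b) t :=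
    (hA.const_mul (Complex.I * m)).add (hB.const_mul (Ω - Complex.I * k))
  have hGx : HasDerivAt
      (fun y : ℝ => -(Complex.I * m) * Ψ₁ (y, t) + (Ω - Complex.I * k) * Ψ₂ (y, t))
      (-(Complex.I * m) * c + (Ω - Complex.I * k) * d) x :=
    (hC.const_mul (-(Complex.I * m))).add (hD.const_mul (Ω - Complex.I * k))
  rw [(hexpT.fun_mul hGt).deriv, (hexpX.fun_mul hGx).deriv]
  have hI : (Complex.I : ℂ) ^ 2 = -1 := Complex.I_sq
  linear_combination
    ((m : ℂ) * Complex.exp (-Complex.I * k * x + Ω * t)) * hp1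
    - Complex.I * (Ω - Complex.I * k) * Complex.exp (-Complex.I * k * x + Ω * t) * hp2
    + Complex.exp (-Complex.I * k * x + Ω * t) * Ψ₂ (x, t) * hΩ
    + (Complex.exp (-Complex.I * k * x + Ω * t) * (Ω - Complex.I * k) * (b - d)
        - Complex.exp (-Complex.I * k * x + Ω * t) * k ^ 2 * Ψ₂ (x, t)) * hI
end

section
/- Let L > 0, T > 0, m > 0, and let Ψ₁, Ψ₂ : [−L,0]×[0,T] → ℂ be continuously differentiable and satisfy i ∂ₜΨ₁ = −i ∂ₓΨ₁ + m Ψ₂ and i ∂ₜΨ₂ = i ∂ₓΨ₂ + m Ψ₁. For k ∈ ℂ and s ∈ [0,T] write Ψ̂ₗ(k,s) = ∫_{−L}^0 e^{−ikx} Ψₗ(x,s) dx, B₋L,ₗ(Ω,t) = ∫_0^t e^{Ωs} Ψₗ(−L,s) ds and B₀,ₗ(Ω,t) = ∫_0^t e^{Ωs} Ψₗ(0,s) ds (l = 1,2). Then for every k ∈ ℂ, every Ω ∈ ℂ with Ω² = −(k²+m²), and every t ∈ [0,T]: i m Ψ̂₁(k,0) + (Ω − ik) Ψ̂₂(k,0)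 + i m e^{ikL} B₋L,₁(Ω,t) − (Ω − ik) e^{ikL} B₋L,₂(Ω,t) − i m e^{Ωt} Ψ̂₁(k,t) − (Ω − ik) e^{Ωt} Ψ̂₂(k,t) − i m B₀,₁(Ω,t) + (Ω − ik) B₀,₂(Ω,t) = 0. -/
open intervalIntegral
open MeasureTheory Set

/-- Fubini for continuous functions on a rectangle, interval-integral version. -/
lemma fubini_rect' {a b c d : ℝ} (hab : a ≤ b) (hcd : c ≤ d) {f : ℝ → ℝ → ℂ}
    (hf : ContinuousOn (fun p : ℝ × ℝ => f p.1 p.2) (Set.Icc a b ×ˢ Set.Icc c d)) :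
    ∫ x in a..b, ∫ y in c..d, f x y = ∫ y in c..d, ∫ x in a..b, f x y := by
  rw [intervalIntegral.integral_of_le hab, intervalIntegral.integral_of_le hcd]
  simp_rw [intervalIntegral.integral_of_le hab, intervalIntegral.integral_of_le hcd]
  rw [MeasureTheory.integral_integral_swap]
  rw [Measure.prod_restrict]
  have h1 : IntegrableOn (fun p : ℝ × ℝ => f p.1 p.2) (Set.Icc a b ×ˢ Set.Icc c d)
      (volume.prod volume) := by
    rw [← Measure.volume_eq_prod]
    exact hf.integrableOn_compact (isCompact_Icc.prod isCompact_Icc)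
  exact h1.mono_set (Set.prod_mono Set.Ioc_subset_Icc_self Set.Ioc_subset_Icc_self)

/-- Slice derivatives from `ContDiffOn` on a product of intervals. -/
lemma slice_derivs' {L T : ℝ} (Ψ : ℝ × ℝ → ℂ)
    (hΨ : ContDiffOn ℝ 1 Ψ (Set.Icc (-L) 0 ×ˢ Set.Icc 0 T))
    {x s : ℝ} (hx : x ∈ Set.Icc (-L) (0:ℝ)) (hs : s ∈ Set.Icc (0:ℝ) T) :
    HasDerivWithinAt (fun y => Ψ (y, s))
      (fderivWithin ℝ Ψ (Set.Icc (-L) 0 ×ˢ Set.Icc 0 T) (x, s) (1, 0)) (Set.Icc (-L) 0) x ∧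
    HasDerivWithinAt (fun s' => Ψ (x, s'))
      (fderivWithin ℝ Ψ (Set.Icc (-L) 0 ×ˢ Set.Icc 0 T) (x, s) (0, 1)) (Set.Icc 0 T) s := by
  have hp : (x, s) ∈ Set.Icc (-L) 0 ×ˢ Set.Icc 0 T := Set.mk_mem_prod hx hs
  have hF : HasFDerivWithinAt Ψ (fderivWithin ℝ Ψ (Set.Icc (-L) 0 ×ˢ Set.Icc 0 T) (x, s))
      (Set.Icc (-L) 0 ×ˢ Set.Icc 0 T) (x, s) :=
    (hΨ.differentiableOn one_ne_zero _ hp).hasFDerivWithinAt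
  constructor
  · have hg : HasDerivWithinAt (fun y : ℝ => ((y, s) : ℝ × ℝ)) ((1 : ℝ), (0 : ℝ))
        (Set.Icc (-L) 0) x :=
      (HasDerivAt.prodMk (hasDerivAt_id x) (hasDerivAt_const x s)).hasDerivWithinAt
    exact hF.comp_hasDerivWithinAt x hg (fun y hy => Set.mk_mem_prod hy hs)
  · have hg : HasDerivWithinAt (fun s' : ℝ => ((x, s') : ℝ × ℝ)) ((0 : ℝ), (1 : ℝ))
        (Set.Icc 0 T) s :=
      (HasDerivAt.prodMk (hasDerivAt_const s x) (hasDerivAt_id s)).hasDerivWithinAt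
    exact hF.comp_hasDerivWithinAt s hg (fun y hy => Set.mk_mem_prod hx hy)

/-- Green's theorem on the rectangle `[-L,0] × [0,t]` for the divergence-form relation
`∂ₜ F + ∂ₓ G = 0`. -/
lemma green_rect {L T : ℝ} (hL : 0 < L) (hT : 0 < T) (F G Gx : ℝ × ℝ → ℂ)
    (hFC : ContinuousOn F (Set.Icc (-L) 0 ×ˢ Set.Icc 0 T))
    (hGC : ContinuousOn G (Set.Icc (-L) 0 ×ˢ Set.Icc 0 T))
    (hGxC : ContinuousOn Gx (Set.Icc (-L) 0 ×ˢ Set.Icc 0 T))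
    (hFt : ∀ x ∈ Set.Icc (-L) (0:ℝ), ∀ s ∈ Set.Icc (0:ℝ) T,
      HasDerivWithinAt (fun s' => F (x, s')) (-(Gx (x, s))) (Set.Icc 0 T) s)
    (hGx : ∀ x ∈ Set.Icc (-L) (0:ℝ), ∀ s ∈ Set.Icc (0:ℝ) T,
      HasDerivWithinAt (fun y => G (y, s)) (Gx (x, s)) (Set.Icc (-L) 0) x)
    (t : ℝ) (ht : t ∈ Set.Icc (0:ℝ) T) :
    (∫ x in (-L)..(0:ℝ), F (x, 0)) - (∫ x in (-L)..(0:ℝ), F (x, t))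
      + ((∫ s in (0:ℝ)..t, G (-L, s)) - (∫ s in (0:ℝ)..t, G (0, s))) = 0 := by
  have hL0 : (-L : ℝ) ≤ 0 := by linarith
  have ht0 : (0:ℝ) ≤ t := ht.1
  have htT : t ≤ T := ht.2
  have hslicex : ∀ x : ℝ, Continuous (fun s : ℝ => ((x, s) : ℝ × ℝ)) := by
    intro x; fun_prop
  have hslices : ∀ s : ℝ, Continuous (fun x : ℝ => ((x, s) : ℝ × ℝ)) := by
    intro s; fun_prop
  -- time FTC
  have stepA : ∀ x ∈ Set.Icc (-L) (0:ℝ),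
      ∫ s in (0:ℝ)..t, -(Gx (x, s)) = F (x, t) - F (x, 0) := by
    intro x hx
    apply integral_eq_sub_of_hasDeriv_right_of_le (f := fun s => F (x, s)) ht0
    · exact ((hFC.comp (hslicex x).continuousOn
        (fun s hs => Set.mk_mem_prod hx hs)).mono (Set.Icc_subset_Icc le_rfl htT))
    · intro s hs
      have hsT : s ∈ Set.Icc (0:ℝ) T := ⟨hs.1.le, (hs.2.trans_le htT).le⟩
      have hnb : Set.Icc (0:ℝ) T ∈ nhds s := Icc_mem_nhds hs.1 (hs.2.trans_le htT)
      exact ((hFt x hx s hsT).hasDerivAt hnb).hasDerivWithinAt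
    · apply ContinuousOn.intervalIntegrable
      refine (((hGxC.comp (hslicex x).continuousOn
        (fun s hs => Set.mk_mem_prod hx hs)).neg).mono ?_)
      rw [Set.uIcc_of_le ht0]; exact Set.Icc_subset_Icc le_rfl htT
  -- space FTC
  have stepC : ∀ s ∈ Set.Icc (0:ℝ) T,
      ∫ x in (-L)..(0:ℝ), Gx (x, s) = G (0, s) - G (-L, s) := by
    intro s hs
    apply integral_eq_sub_of_hasDeriv_right_of_le (f := fun x => G (x, s)) hL0
    · exact hGC.comp (hslices s).continuousOn (fun x hx => Set.mk_mem_prod hx hs)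
    · intro x hx
      have hnb : Set.Icc (-L) (0:ℝ) ∈ nhds x := Icc_mem_nhds hx.1 hx.2
      exact ((hGx x ⟨hx.1.le, hx.2.le⟩ s hs).hasDerivAt hnb).hasDerivWithinAt
    · apply ContinuousOn.intervalIntegrable
      refine (hGxC.comp (hslices s).continuousOn (fun x hx => Set.mk_mem_prod hx hs)).mono ?_
      rw [Set.uIcc_of_le hL0]
  -- Fubini
  have fub : ∫ x in (-L)..(0:ℝ), ∫ s in (0:ℝ)..t, Gx (x, s)
      = ∫ s in (0:ℝ)..t, ∫ x in (-L)..(0:ℝ), Gx (x, s) := by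
    apply fubini_rect' hL0 ht0
    refine (hGxC.mono ?_).congr (fun p _ => rfl)
    exact Set.prod_mono subset_rfl (Set.Icc_subset_Icc le_rfl htT)
  -- integrability of slices
  have hF0Int : IntervalIntegrable (fun x => F (x, 0)) volume (-L) 0 := by
    apply ContinuousOn.intervalIntegrable
    refine (hFC.comp (hslices 0).continuousOn
      (fun x hx => Set.mk_mem_prod hx ⟨le_rfl, hT.le⟩)).mono ?_
    rw [Set.uIcc_of_le hL0]
  have hFtInt : IntervalIntegrable (fun x => F (x, t)) volume (-L) 0 := by
    apply ContinuousOn.intervalIntegrable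
    refine (hFC.comp (hslices t).continuousOn
      (fun x hx => Set.mk_mem_prod hx ht)).mono ?_
    rw [Set.uIcc_of_le hL0]
  have hGlInt : IntervalIntegrable (fun s => G (-L, s)) volume 0 t := by
    apply ContinuousOn.intervalIntegrable
    refine (hGC.comp (hslicex (-L)).continuousOn
      (fun s hs => Set.mk_mem_prod ⟨le_rfl, hL0⟩ hs)).mono ?_
    rw [Set.uIcc_of_le ht0]; exact Set.Icc_subset_Icc le_rfl htT
  have hG0Int : IntervalIntegrable (fun s => G (0, s)) volume 0 t := by
    apply ContinuousOn.intervalIntegrable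
    refine (hGC.comp (hslicex 0).continuousOn
      (fun s hs => Set.mk_mem_prod ⟨hL0, le_rfl⟩ hs)).mono ?_
    rw [Set.uIcc_of_le ht0]; exact Set.Icc_subset_Icc le_rfl htT
  have A1 : (∫ x in (-L)..(0:ℝ), F (x, t)) - ∫ x in (-L)..(0:ℝ), F (x, 0)
      = ∫ x in (-L)..(0:ℝ), (F (x, t) - F (x, 0)) := (integral_sub hFtInt hF0Int).symm
  have A2 : ∫ x in (-L)..(0:ℝ), (F (x, t) - F (x, 0))
      = ∫ x in (-L)..(0:ℝ), ∫ s in (0:ℝ)..t, -(Gx (x, s)) := by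
    apply integral_congr
    intro x hx
    rw [Set.uIcc_of_le hL0] at hx
    exact (stepA x hx).symm
  have A3 : ∫ x in (-L)..(0:ℝ), ∫ s in (0:ℝ)..t, -(Gx (x, s))
      = -∫ x in (-L)..(0:ℝ), ∫ s in (0:ℝ)..t, Gx (x, s) := by
    simp_rw [intervalIntegral.integral_neg]
  have A5 : ∫ s in (0:ℝ)..t, ∫ x in (-L)..(0:ℝ), Gx (x, s)
      = ∫ s in (0:ℝ)..t, (G (0, s) - G (-L, s)) := by
    apply integral_congr
    intro s hs
    rw [Set.uIcc_of_le ht0] at hs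
    exact stepC s ⟨hs.1, hs.2.trans htT⟩
  have A6 : ∫ s in (0:ℝ)..t, (G (0, s) - G (-L, s))
      = (∫ s in (0:ℝ)..t, G (0, s)) - ∫ s in (0:ℝ)..t, G (-L, s) :=
    integral_sub hG0Int hGlInt
  have T1 : (∫ x in (-L)..(0:ℝ), F (x, t)) - ∫ x in (-L)..(0:ℝ), F (x, 0)
      = (∫ s in (0:ℝ)..t, G (-L, s)) - ∫ s in (0:ℝ)..t, G (0, s) := by
    rw [A1, A2, A3, fub, A5, A6]; ring
  linear_combination -T1

/-- Global relation (via Green's theorem) for a continuously differentiable solution of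
the massive Dirac system on the rectangle `[-L,0] × [0,T]`, for any branch `Ω` of the
dispersion relation `Ω² = -(k² + m²)`. -/
theorem massive_dirac_global_relation_left_interval
    (L T m : ℝ) (hL : 0 < L) (hT : 0 < T) (hm : 0 < m)
    (Ψ₁ Ψ₂ : ℝ × ℝ → ℂ)
    (hΨ₁ : ContDiffOn ℝ 1 Ψ₁ (Set.Icc (-L) 0 ×ˢ Set.Icc 0 T))
    (hΨ₂ : ContDiffOn ℝ 1 Ψ₂ (Set.Icc (-L) 0 ×ˢ Set.Icc 0 T))
    (pde₁ : ∀ x ∈ Set.Icc (-L) (0:ℝ), ∀ t ∈ Set.Icc (0:ℝ) T,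
        Complex.I * derivWithin (fun s : ℝ => Ψ₁ (x, s)) (Set.Icc 0 T) t =
          -Complex.I * derivWithin (fun y : ℝ => Ψ₁ (y, t)) (Set.Icc (-L) 0) x
            + m * Ψ₂ (x, t))
    (pde₂ : ∀ x ∈ Set.Icc (-L) (0:ℝ), ∀ t ∈ Set.Icc (0:ℝ) T,
        Complex.I * derivWithin (fun s : ℝ => Ψ₂ (x, s)) (Set.Icc 0 T) t =
          Complex.I * derivWithin (fun y : ℝ => Ψ₂ (y, t)) (Set.Icc (-L) 0) x
            + m * Ψ₁ (x, t)) :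
    ∀ (k Ω : ℂ), Ω ^ 2 = -(k ^ 2 + m ^ 2) → ∀ t ∈ Set.Icc (0:ℝ) T,
      Complex.I * m * (∫ x in (-L)..(0:ℝ), Complex.exp (-Complex.I * k * x) * Ψ₁ (x, 0))
      + (Ω - Complex.I * k) *
          (∫ x in (-L)..(0:ℝ), Complex.exp (-Complex.I * k * x) * Ψ₂ (x, 0))
      + Complex.I * m * Complex.exp (Complex.I * k * L) *
          (∫ s in (0:ℝ)..t, Complex.exp (Ω * s) * Ψ₁ (-L, s))
      - (Ω - Complex.I * k) * Complex.exp (Complex.I * k * L) *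
          (∫ s in (0:ℝ)..t, Complex.exp (Ω * s) * Ψ₂ (-L, s))
      - Complex.I * m * Complex.exp (Ω * t) *
          (∫ x in (-L)..(0:ℝ), Complex.exp (-Complex.I * k * x) * Ψ₁ (x, t))
      - (Ω - Complex.I * k) * Complex.exp (Ω * t) *
          (∫ x in (-L)..(0:ℝ), Complex.exp (-Complex.I * k * x) * Ψ₂ (x, t))
      - Complex.I * m * (∫ s in (0:ℝ)..t, Complex.exp (Ω * s) * Ψ₁ (0, s))
      + (Ω - Complex.I * k) * (∫ s in (0:ℝ)..t, Complex.exp (Ω * s) * Ψ₂ (0, s)) = 0 := by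
  intro k Ω hΩ t ht
  have hL' : (-L : ℝ) < 0 := by linarith
  have hL0 : (-L : ℝ) ≤ 0 := hL'.le
  set S : Set (ℝ × ℝ) := Set.Icc (-L) 0 ×ˢ Set.Icc 0 T with hSdef
  have hS : UniqueDiffOn ℝ S := (uniqueDiffOn_Icc hL').prod (uniqueDiffOn_Icc hT)
  -- notation for the four fderiv slices
  set P₁ : ℝ × ℝ → ℂ := fun p => fderivWithin ℝ Ψ₁ S p (1, 0) with hP₁def
  set P₂ : ℝ × ℝ → ℂ := fun p => fderivWithin ℝ Ψ₂ S p (1, 0) with hP₂def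
  -- the divergence-form functions
  set F : ℝ × ℝ → ℂ := fun p =>
    Complex.exp (-Complex.I * k * p.1 + Ω * p.2) *
      (Complex.I * m * Ψ₁ p + (Ω - Complex.I * k) * Ψ₂ p) with hFdef
  set G : ℝ × ℝ → ℂ := fun p =>
    Complex.exp (-Complex.I * k * p.1 + Ω * p.2) *
      (Complex.I * m * Ψ₁ p - (Ω - Complex.I * k) * Ψ₂ p) with hGdef
  set Gx : ℝ × ℝ → ℂ := fun p =>
    Complex.exp (-Complex.I * k * p.1 + Ω * p.2) *
      (-(Complex.I * k) * (Complex.I * m * Ψ₁ p - (Ω - Complex.I * k) * Ψ₂ p)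
        + Complex.I * m * P₁ p - (Ω - Complex.I * k) * P₂ p) with hGxdef
  -- continuity facts
  have hC₁ : ContinuousOn Ψ₁ S := hΨ₁.continuousOn
  have hC₂ : ContinuousOn Ψ₂ S := hΨ₂.continuousOn
  have hP₁C : ContinuousOn P₁ S :=
    (hΨ₁.continuousOn_fderivWithin hS le_rfl).clm_apply continuousOn_const
  have hP₂C : ContinuousOn P₂ S :=
    (hΨ₂.continuousOn_fderivWithin hS le_rfl).clm_apply continuousOn_const
  have hexpC : Continuous (fun p : ℝ × ℝ => Complex.exp (-Complex.I * k * p.1 + Ω * p.2)) := by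
    fun_prop
  have hFC : ContinuousOn F S :=
    hexpC.continuousOn.mul ((continuousOn_const.mul hC₁).add (continuousOn_const.mul hC₂))
  have hGC : ContinuousOn G S :=
    hexpC.continuousOn.mul ((continuousOn_const.mul hC₁).sub (continuousOn_const.mul hC₂))
  have hGxC : ContinuousOn Gx S :=
    hexpC.continuousOn.mul
      (((continuousOn_const.mul ((continuousOn_const.mul hC₁).sub (continuousOn_const.mul hC₂))).add
        (continuousOn_const.mul hP₁C)).sub (continuousOn_const.mul hP₂C))
  -- PDE in fderivWithin form
  have hq1 : ∀ x ∈ Set.Icc (-L) (0:ℝ), ∀ s ∈ Set.Icc (0:ℝ) T,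
      fderivWithin ℝ Ψ₁ S (x, s) (0, 1) = -P₁ (x, s) - Complex.I * m * Ψ₂ (x, s) := by
    intro x hx s hs
    have hd1 := ((slice_derivs' Ψ₁ hΨ₁ hx hs).1).derivWithin ((uniqueDiffOn_Icc hL') x hx)
    have hd2 := ((slice_derivs' Ψ₁ hΨ₁ hx hs).2).derivWithin ((uniqueDiffOn_Icc hT) s hs)
    have hp := pde₁ x hx s hs
    rw [hd1, hd2] at hp
    simp only [hP₁def]
    linear_combination (-Complex.I) * hp +
      (fderivWithin ℝ Ψ₁ S (x, s) (0, 1) + fderivWithin ℝ Ψ₁ S (x, s) (1, 0)) * Complex.I_sq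
  have hq2 : ∀ x ∈ Set.Icc (-L) (0:ℝ), ∀ s ∈ Set.Icc (0:ℝ) T,
      fderivWithin ℝ Ψ₂ S (x, s) (0, 1) = P₂ (x, s) - Complex.I * m * Ψ₁ (x, s) := by
    intro x hx s hs
    have hd1 := ((slice_derivs' Ψ₂ hΨ₂ hx hs).1).derivWithin ((uniqueDiffOn_Icc hL') x hx)
    have hd2 := ((slice_derivs' Ψ₂ hΨ₂ hx hs).2).derivWithin ((uniqueDiffOn_Icc hT) s hs)
    have hp := pde₂ x hx s hs
    rw [hd1, hd2] at hp
    simp only [hP₂def]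
    linear_combination (-Complex.I) * hp +
      (fderivWithin ℝ Ψ₂ S (x, s) (0, 1) - fderivWithin ℝ Ψ₂ S (x, s) (1, 0)) * Complex.I_sq
  -- time derivative of F
  have hFt : ∀ x ∈ Set.Icc (-L) (0:ℝ), ∀ s ∈ Set.Icc (0:ℝ) T,
      HasDerivWithinAt (fun s' => F (x, s')) (-(Gx (x, s))) (Set.Icc 0 T) s := by
    intro x hx s hs
    have h1 := (slice_derivs' Ψ₁ hΨ₁ hx hs).2
    have h2 := (slice_derivs' Ψ₂ hΨ₂ hx hs).2
    have hcomb : HasDerivWithinAt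
        (fun s' => Complex.I * m * Ψ₁ (x, s') + (Ω - Complex.I * k) * Ψ₂ (x, s'))
        (Complex.I * m * fderivWithin ℝ Ψ₁ S (x, s) (0, 1)
          + (Ω - Complex.I * k) * fderivWithin ℝ Ψ₂ S (x, s) (0, 1)) (Set.Icc 0 T) s :=
      (h1.const_mul _).add (h2.const_mul _)
    have hexp : HasDerivAt (fun s' : ℝ => Complex.exp (-Complex.I * k * x + Ω * s'))
        (Complex.exp (-Complex.I * k * x + Ω * s) * Ω) s := by
      have h0 : HasDerivAt (fun s' : ℝ => -Complex.I * k * (x:ℂ) + Ω * s') Ω s := by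
        simpa using ((Complex.ofRealCLM.hasDerivAt (x := s)).const_mul Ω).const_add
          (-Complex.I * k * (x:ℂ))
      simpa using h0.cexp
    have hmul := hexp.hasDerivWithinAt.mul hcomb
    have heq : -(Gx (x, s)) =
        Complex.exp (-Complex.I * k * x + Ω * s) * Ω *
          (Complex.I * m * Ψ₁ (x, s) + (Ω - Complex.I * k) * Ψ₂ (x, s))
        + Complex.exp (-Complex.I * k * x + Ω * s) *
          (Complex.I * m * fderivWithin ℝ Ψ₁ S (x, s) (0, 1)
            + (Ω - Complex.I * k) * fderivWithin ℝ Ψ₂ S (x, s) (0, 1)) := by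
      rw [hq1 x hx s hs, hq2 x hx s hs]
      simp only [hGxdef, hP₁def, hP₂def]
      linear_combination
        (Complex.exp (-Complex.I * k * x + Ω * s) * Ψ₂ (x, s) * (k ^ 2 + (m:ℂ) ^ 2)) *
          Complex.I_sq
        - (Complex.exp (-Complex.I * k * x + Ω * s) * Ψ₂ (x, s)) * hΩ
    rw [heq]
    exact hmul
  -- space derivative of G
  have hGxd : ∀ x ∈ Set.Icc (-L) (0:ℝ), ∀ s ∈ Set.Icc (0:ℝ) T,
      HasDerivWithinAt (fun y => G (y, s)) (Gx (x, s)) (Set.Icc (-L) 0) x := by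
    intro x hx s hs
    have h1 := (slice_derivs' Ψ₁ hΨ₁ hx hs).1
    have h2 := (slice_derivs' Ψ₂ hΨ₂ hx hs).1
    have hcomb : HasDerivWithinAt
        (fun y => Complex.I * m * Ψ₁ (y, s) - (Ω - Complex.I * k) * Ψ₂ (y, s))
        (Complex.I * m * P₁ (x, s) - (Ω - Complex.I * k) * P₂ (x, s)) (Set.Icc (-L) 0) x :=
      (h1.const_mul _).sub (h2.const_mul _)
    have hexp : HasDerivAt (fun y : ℝ => Complex.exp (-Complex.I * k * y + Ω * s))
        (Complex.exp (-Complex.I * k * x + Ω * s) * (-(Complex.I * k))) x := by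
      have h0 : HasDerivAt (fun y : ℝ => -Complex.I * k * (y:ℂ) + Ω * (s:ℂ))
          (-(Complex.I * k)) x := by
        simpa using ((Complex.ofRealCLM.hasDerivAt (x := x)).const_mul
          (-Complex.I * k)).add_const (Ω * (s:ℂ))
      simpa using h0.cexp
    have hmul := hexp.hasDerivWithinAt.mul hcomb
    have heq : Gx (x, s) =
        Complex.exp (-Complex.I * k * x + Ω * s) * (-(Complex.I * k)) *
          (Complex.I * m * Ψ₁ (x, s) - (Ω - Complex.I * k) * Ψ₂ (x, s))
        + Complex.exp (-Complex.I * k * x + Ω * s) *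
          (Complex.I * m * P₁ (x, s) - (Ω - Complex.I * k) * P₂ (x, s)) := by
      simp only [hGxdef]
      ring
    rw [heq]
    exact hmul
  have key := green_rect hL hT F G Gx hFC hGC hGxC hFt hGxd t ht
  -- expansion of the four boundary integrals
  have i10 : IntervalIntegrable (fun x : ℝ => Complex.exp (-Complex.I * k * x) * Ψ₁ (x, 0))
      volume (-L) 0 := by
    apply ContinuousOn.intervalIntegrable
    rw [Set.uIcc_of_le hL0]
    exact (Continuous.continuousOn (by fun_prop)).mul
      (hC₁.comp (Continuous.continuousOn (by fun_prop))
        (fun x hx => Set.mk_mem_prod hx ⟨le_rfl, hT.le⟩))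
  have i20 : IntervalIntegrable (fun x : ℝ => Complex.exp (-Complex.I * k * x) * Ψ₂ (x, 0))
      volume (-L) 0 := by
    apply ContinuousOn.intervalIntegrable
    rw [Set.uIcc_of_le hL0]
    exact (Continuous.continuousOn (by fun_prop)).mul
      (hC₂.comp (Continuous.continuousOn (by fun_prop))
        (fun x hx => Set.mk_mem_prod hx ⟨le_rfl, hT.le⟩))
  have i1t : IntervalIntegrable (fun x : ℝ => Complex.exp (-Complex.I * k * x) * Ψ₁ (x, t))
      volume (-L) 0 := by
    apply ContinuousOn.intervalIntegrable
    rw [Set.uIcc_of_le hL0]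
    exact (Continuous.continuousOn (by fun_prop)).mul
      (hC₁.comp (Continuous.continuousOn (by fun_prop))
        (fun x hx => Set.mk_mem_prod hx ht))
  have i2t : IntervalIntegrable (fun x : ℝ => Complex.exp (-Complex.I * k * x) * Ψ₂ (x, t))
      volume (-L) 0 := by
    apply ContinuousOn.intervalIntegrable
    rw [Set.uIcc_of_le hL0]
    exact (Continuous.continuousOn (by fun_prop)).mul
      (hC₂.comp (Continuous.continuousOn (by fun_prop))
        (fun x hx => Set.mk_mem_prod hx ht))
  have j1l : IntervalIntegrable (fun s : ℝ => Complex.exp (Ω * s) * Ψ₁ (-L, s)) volume 0 t := by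
    apply ContinuousOn.intervalIntegrable
    rw [Set.uIcc_of_le ht.1]
    exact (Continuous.continuousOn (by fun_prop)).mul
      (hC₁.comp (Continuous.continuousOn (by fun_prop))
        (fun s hs => Set.mk_mem_prod ⟨le_rfl, hL0⟩ ⟨hs.1, hs.2.trans ht.2⟩))
  have j2l : IntervalIntegrable (fun s : ℝ => Complex.exp (Ω * s) * Ψ₂ (-L, s)) volume 0 t := by
    apply ContinuousOn.intervalIntegrable
    rw [Set.uIcc_of_le ht.1]
    exact (Continuous.continuousOn (by fun_prop)).mul
      (hC₂.comp (Continuous.continuousOn (by fun_prop))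
        (fun s hs => Set.mk_mem_prod ⟨le_rfl, hL0⟩ ⟨hs.1, hs.2.trans ht.2⟩))
  have j10 : IntervalIntegrable (fun s : ℝ => Complex.exp (Ω * s) * Ψ₁ (0, s)) volume 0 t := by
    apply ContinuousOn.intervalIntegrable
    rw [Set.uIcc_of_le ht.1]
    exact (Continuous.continuousOn (by fun_prop)).mul
      (hC₁.comp (Continuous.continuousOn (by fun_prop))
        (fun s hs => Set.mk_mem_prod ⟨hL0, le_rfl⟩ ⟨hs.1, hs.2.trans ht.2⟩))
  have j20 : IntervalIntegrable (fun s : ℝ => Complex.exp (Ω * s) * Ψ₂ (0, s)) volume 0 t := by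
    apply ContinuousOn.intervalIntegrable
    rw [Set.uIcc_of_le ht.1]
    exact (Continuous.continuousOn (by fun_prop)).mul
      (hC₂.comp (Continuous.continuousOn (by fun_prop))
        (fun s hs => Set.mk_mem_prod ⟨hL0, le_rfl⟩ ⟨hs.1, hs.2.trans ht.2⟩))
  have e1 : ∫ x in (-L)..(0:ℝ), F (x, 0) =
      Complex.I * m * (∫ x in (-L)..(0:ℝ), Complex.exp (-Complex.I * k * x) * Ψ₁ (x, 0))
      + (Ω - Complex.I * k) *
          (∫ x in (-L)..(0:ℝ), Complex.exp (-Complex.I * k * x) * Ψ₂ (x, 0)) := by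
    rw [← intervalIntegral.integral_const_mul, ← intervalIntegral.integral_const_mul, ← intervalIntegral.integral_add (i10.const_mul _)
      (i20.const_mul _)]
    apply integral_congr
    intro x hx
    simp only [hFdef, Complex.ofReal_zero, mul_zero, add_zero]
    ring
  have e2 : ∫ x in (-L)..(0:ℝ), F (x, t) =
      Complex.I * m * Complex.exp (Ω * t) *
          (∫ x in (-L)..(0:ℝ), Complex.exp (-Complex.I * k * x) * Ψ₁ (x, t))
      + (Ω - Complex.I * k) * Complex.exp (Ω * t) *
          (∫ x in (-L)..(0:ℝ), Complex.exp (-Complex.I * k * x) * Ψ₂ (x, t)) := by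
    rw [← intervalIntegral.integral_const_mul, ← intervalIntegral.integral_const_mul, ← intervalIntegral.integral_add (i1t.const_mul _)
      (i2t.const_mul _)]
    apply integral_congr
    intro x hx
    simp only [hFdef, Complex.exp_add]
    ring
  have e3 : ∫ s in (0:ℝ)..t, G (-L, s) =
      Complex.I * m * Complex.exp (Complex.I * k * L) *
          (∫ s in (0:ℝ)..t, Complex.exp (Ω * s) * Ψ₁ (-L, s))
      - (Ω - Complex.I * k) * Complex.exp (Complex.I * k * L) *
          (∫ s in (0:ℝ)..t, Complex.exp (Ω * s) * Ψ₂ (-L, s)) := by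
    rw [← intervalIntegral.integral_const_mul, ← intervalIntegral.integral_const_mul, ← intervalIntegral.integral_sub (j1l.const_mul _)
      (j2l.const_mul _)]
    apply integral_congr
    intro s hs
    simp only [hGdef]
    rw [show -Complex.I * k * ((-L : ℝ) : ℂ) + Ω * (s:ℂ) = Complex.I * k * (L:ℂ) + Ω * s by
      push_cast; ring, Complex.exp_add]
    ring
  have e4 : ∫ s in (0:ℝ)..t, G (0, s) =
      Complex.I * m * (∫ s in (0:ℝ)..t, Complex.exp (Ω * s) * Ψ₁ (0, s))
      - (Ω - Complex.I * k) * (∫ s in (0:ℝ)..t, Complex.exp (Ω * s) * Ψ₂ (0, s)) := by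
    rw [← intervalIntegral.integral_const_mul, ← intervalIntegral.integral_const_mul, ← intervalIntegral.integral_sub (j10.const_mul _)
      (j20.const_mul _)]
    apply integral_congr
    intro s hs
    simp only [hGdef, Complex.ofReal_zero, mul_zero, zero_add, neg_zero]
    ring
  linear_combination key - e1 + e2 - e3 + e4
end

section
/- Let L > 0, T > 0, m > 0, and let Ψ₁, Ψ₂ : [0,L]×[0,T] → ℂ be continuously differentiable and satisfy i ∂ₜΨ₁ = −i ∂ₓΨ₁ + m Ψ₂ and i ∂ₜΨ₂ = i ∂ₓΨ₂ + m Ψ₁. For k ∈ ℂ and s ∈ [0,T] write Ψ̂ₗ(k,s) = ∫_0^L e^{−ikx} Ψₗ(x,s) dx, B_L,ₗ(Ω,t) = ∫_0^t e^{Ωs} Ψₗ(L,s) ds and B₀,ₗ(Ω,t) = ∫_0^t e^{Ωs} Ψₗ(0,s) ds (l = 1,2). Then for every k ∈ ℂ, every Ω ∈ ℂ with Ω² = −(k²+m²), and every t ∈ [0,T]: i m Ψ̂₁(k,0) + (Ω − ik) Ψ̂₂(k,0) − i m e^{−ikL} B_L,₁(Ω,t) + (Ω − ik) e^{−ikL}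 B_L,₂(Ω,t) − i m e^{Ωt} Ψ̂₁(k,t) + (ik − Ω) e^{Ωt} Ψ̂₂(k,t) + i m B₀,₁(Ω,t) + (ik − Ω) B₀,₂(Ω,t) = 0. -/
open intervalIntegral

open Set MeasureTheory in
/-- Within-differentiability of the time slice of a `C¹` function on a rectangle. -/
private lemma dirac_sliceT {L T : ℝ} {Ψ : ℝ × ℝ → ℂ}
    (h : ContDiffOn ℝ 1 Ψ (Set.Icc 0 L ×ˢ Set.Icc 0 T))
    {x s : ℝ} (hx : x ∈ Set.Icc 0 L) (hs : s ∈ Set.Icc 0 T) :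
    HasDerivWithinAt (fun r => Ψ (x, r))
      (fderivWithin ℝ Ψ (Set.Icc 0 L ×ˢ Set.Icc 0 T) (x, s) (0, 1)) (Set.Icc 0 T) s := by
  have hdiff := (h.differentiableOn one_ne_zero) (x, s) ⟨hx, hs⟩
  have inner : HasDerivWithinAt (fun r : ℝ => ((x, r) : ℝ × ℝ)) ((0 : ℝ), (1 : ℝ))
      (Set.Icc 0 T) s := (hasDerivWithinAt_const _ _ x).prodMk (hasDerivWithinAt_id _ _)
  exact hdiff.hasFDerivWithinAt.comp_hasDerivWithinAt s inner (fun r hr => ⟨hx, hr⟩)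

open Set MeasureTheory in
/-- Within-differentiability of the space slice of a `C¹` function on a rectangle. -/
private lemma dirac_sliceX {L T : ℝ} {Ψ : ℝ × ℝ → ℂ}
    (h : ContDiffOn ℝ 1 Ψ (Set.Icc 0 L ×ˢ Set.Icc 0 T))
    {x s : ℝ} (hx : x ∈ Set.Icc 0 L) (hs : s ∈ Set.Icc 0 T) :
    HasDerivWithinAt (fun y => Ψ (y, s))
      (fderivWithin ℝ Ψ (Set.Icc 0 L ×ˢ Set.Icc 0 T) (x, s) (1, 0)) (Set.Icc 0 L) x := by
  have hdiff := (h.differentiableOn one_ne_zero) (x, s) ⟨hx, hs⟩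
  have inner : HasDerivWithinAt (fun y : ℝ => ((y, s) : ℝ × ℝ)) ((1 : ℝ), (0 : ℝ))
      (Set.Icc 0 L) x := (hasDerivWithinAt_id _ _).prodMk (hasDerivWithinAt_const _ _ s)
  exact hdiff.hasFDerivWithinAt.comp_hasDerivWithinAt x inner (fun y hy => (⟨hy, hs⟩ : (y, s) ∈ Set.Icc 0 L ×ˢ Set.Icc 0 T))

/-- Global relation (via Green's theorem) for a continuously differentiable solution of
the massive Dirac system on the rectangle `[0,L] × [0,T]`, for any branch `Ω` of the
dispersion relation `Ω² = -(k² + m²)`. -/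
theorem massive_dirac_global_relation_right_interval
    (L T m : ℝ) (hL : 0 < L) (hT : 0 < T) (hm : 0 < m)
    (Ψ₁ Ψ₂ : ℝ × ℝ → ℂ)
    (hΨ₁ : ContDiffOn ℝ 1 Ψ₁ (Set.Icc 0 L ×ˢ Set.Icc 0 T))
    (hΨ₂ : ContDiffOn ℝ 1 Ψ₂ (Set.Icc 0 L ×ˢ Set.Icc 0 T))
    (pde₁ : ∀ x ∈ Set.Icc (0:ℝ) L, ∀ t ∈ Set.Icc (0:ℝ) T,
        Complex.I * derivWithin (fun s : ℝ => Ψ₁ (x, s)) (Set.Icc 0 T) t =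
          -Complex.I * derivWithin (fun y : ℝ => Ψ₁ (y, t)) (Set.Icc 0 L) x
            + m * Ψ₂ (x, t))
    (pde₂ : ∀ x ∈ Set.Icc (0:ℝ) L, ∀ t ∈ Set.Icc (0:ℝ) T,
        Complex.I * derivWithin (fun s : ℝ => Ψ₂ (x, s)) (Set.Icc 0 T) t =
          Complex.I * derivWithin (fun y : ℝ => Ψ₂ (y, t)) (Set.Icc 0 L) x
            + m * Ψ₁ (x, t)) :
    ∀ (k Ω : ℂ), Ω ^ 2 = -(k ^ 2 + m ^ 2) → ∀ t ∈ Set.Icc (0:ℝ) T,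
      Complex.I * m * (∫ x in (0:ℝ)..L, Complex.exp (-Complex.I * k * x) * Ψ₁ (x, 0))
      + (Ω - Complex.I * k) *
          (∫ x in (0:ℝ)..L, Complex.exp (-Complex.I * k * x) * Ψ₂ (x, 0))
      - Complex.I * m * Complex.exp (-Complex.I * k * L) *
          (∫ s in (0:ℝ)..t, Complex.exp (Ω * s) * Ψ₁ (L, s))
      + (Ω - Complex.I * k) * Complex.exp (-Complex.I * k * L) *
          (∫ s in (0:ℝ)..t, Complex.exp (Ω * s) * Ψ₂ (L, s))
      - Complex.I * m * Complex.exp (Ω * t) *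
          (∫ x in (0:ℝ)..L, Complex.exp (-Complex.I * k * x) * Ψ₁ (x, t))
      + (Complex.I * k - Ω) * Complex.exp (Ω * t) *
          (∫ x in (0:ℝ)..L, Complex.exp (-Complex.I * k * x) * Ψ₂ (x, t))
      + Complex.I * m * (∫ s in (0:ℝ)..t, Complex.exp (Ω * s) * Ψ₁ (0, s))
      + (Complex.I * k - Ω) * (∫ s in (0:ℝ)..t, Complex.exp (Ω * s) * Ψ₂ (0, s)) = 0 := by
  intro k Ω hΩ t ht
  obtain ⟨ht0, htT⟩ := ht
  set I : ℂ := Complex.I with hIdef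
  have hI : I ^ 2 = -1 := Complex.I_sq
  set D : Set (ℝ × ℝ) := Set.Icc 0 L ×ˢ Set.Icc 0 T with hDdef
  have hUD : UniqueDiffOn ℝ D := (uniqueDiffOn_Icc hL).prod (uniqueDiffOn_Icc hT)
  have hUT : UniqueDiffOn ℝ (Set.Icc (0:ℝ) T) := uniqueDiffOn_Icc hT
  have hUL : UniqueDiffOn ℝ (Set.Icc (0:ℝ) L) := uniqueDiffOn_Icc hL
  -- partial derivatives
  set dt1 : ℝ × ℝ → ℂ := fun p => fderivWithin ℝ Ψ₁ D p (0, 1) with hdt1def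
  set dt2 : ℝ × ℝ → ℂ := fun p => fderivWithin ℝ Ψ₂ D p (0, 1) with hdt2def
  set dx1 : ℝ × ℝ → ℂ := fun p => fderivWithin ℝ Ψ₁ D p (1, 0) with hdx1def
  set dx2 : ℝ × ℝ → ℂ := fun p => fderivWithin ℝ Ψ₂ D p (1, 0) with hdx2def
  have hT1 : ∀ x ∈ Set.Icc (0:ℝ) L, ∀ s ∈ Set.Icc (0:ℝ) T,
      HasDerivWithinAt (fun r => Ψ₁ (x, r)) (dt1 (x, s)) (Set.Icc 0 T) s :=
    fun x hx s hs => dirac_sliceT hΨ₁ hx hs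
  have hT2 : ∀ x ∈ Set.Icc (0:ℝ) L, ∀ s ∈ Set.Icc (0:ℝ) T,
      HasDerivWithinAt (fun r => Ψ₂ (x, r)) (dt2 (x, s)) (Set.Icc 0 T) s :=
    fun x hx s hs => dirac_sliceT hΨ₂ hx hs
  have hX1 : ∀ x ∈ Set.Icc (0:ℝ) L, ∀ s ∈ Set.Icc (0:ℝ) T,
      HasDerivWithinAt (fun y => Ψ₁ (y, s)) (dx1 (x, s)) (Set.Icc 0 L) x :=
    fun x hx s hs => dirac_sliceX hΨ₁ hx hs
  have hX2 : ∀ x ∈ Set.Icc (0:ℝ) L, ∀ s ∈ Set.Icc (0:ℝ) T,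
      HasDerivWithinAt (fun y => Ψ₂ (y, s)) (dx2 (x, s)) (Set.Icc 0 L) x :=
    fun x hx s hs => dirac_sliceX hΨ₂ hx hs
  -- PDE in terms of the within-partials
  have pde1' : ∀ x ∈ Set.Icc (0:ℝ) L, ∀ s ∈ Set.Icc (0:ℝ) T,
      I * dt1 (x, s) = -I * dx1 (x, s) + m * Ψ₂ (x, s) := by
    intro x hx s hs
    have h := pde₁ x hx s hs
    rwa [(hT1 x hx s hs).derivWithin (hUT s hs), (hX1 x hx s hs).derivWithin (hUL x hx)] at h
  have pde2' : ∀ x ∈ Set.Icc (0:ℝ) L, ∀ s ∈ Set.Icc (0:ℝ) T,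
      I * dt2 (x, s) = I * dx2 (x, s) + m * Ψ₁ (x, s) := by
    intro x hx s hs
    have h := pde₂ x hx s hs
    rwa [(hT2 x hx s hs).derivWithin (hUT s hs), (hX2 x hx s hs).derivWithin (hUL x hx)] at h
  -- the divergence-form quantities
  set W : ℝ × ℝ → ℂ := fun p => I * m * Ψ₁ p + (Ω - I * k) * Ψ₂ p with hWdef
  set Z : ℝ × ℝ → ℂ := fun p => I * m * Ψ₁ p + (I * k - Ω) * Ψ₂ p with hZdef
  set u : ℝ × ℝ → ℂ := fun p => Complex.exp (-I * k * p.1) * (Complex.exp (Ω * p.2) * W p)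
    with hudef
  set v : ℝ × ℝ → ℂ := fun p => Complex.exp (-I * k * p.1) * (Complex.exp (Ω * p.2) * Z p)
    with hvdef
  set U' : ℝ × ℝ → ℂ := fun p => Complex.exp (-I * k * p.1) * (Complex.exp (Ω * p.2) *
      (Ω * W p + (I * m * dt1 p + (Ω - I * k) * dt2 p))) with hU'def
  set V' : ℝ × ℝ → ℂ := fun p => Complex.exp (-I * k * p.1) * (Complex.exp (Ω * p.2) *
      ((-(I * k)) * Z p + (I * m * dx1 p + (I * k - Ω) * dx2 p))) with hV'def
  -- local relation
  have hlocal : ∀ x ∈ Set.Icc (0:ℝ) L, ∀ s ∈ Set.Icc (0:ℝ) T, U' (x, s) = -V' (x, s) := by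
    intro x hx s hs
    have h1 := pde1' x hx s hs
    have h2 := pde2' x hx s hs
    simp only [hU'def, hV'def, hWdef, hZdef]
    set E := Complex.exp (-I * k * ↑x) * Complex.exp (Ω * ↑s) with hE
    linear_combination (E * m) * h1 + (E * (-I) * (Ω - I * k)) * h2
      + (E * Ψ₂ (x, s)) * hΩ
      + (E * ((Ω - I * k) * (dt2 (x, s) - dx2 (x, s)) - k ^ 2 * Ψ₂ (x, s))) * hI
  -- derivative of the time slice of u
  have hUd : ∀ x ∈ Set.Icc (0:ℝ) L, ∀ s ∈ Set.Icc (0:ℝ) T,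
      HasDerivWithinAt (fun r => u (x, r)) (U' (x, s)) (Set.Icc 0 T) s := by
    intro x hx s hs
    have hexp : HasDerivAt (fun r : ℝ => Complex.exp (Ω * r)) (Complex.exp (Ω * s) * Ω) s := by
      have h0 : HasDerivAt (fun r : ℝ => Ω * (r : ℂ)) Ω s := by
        simpa using (Complex.ofRealCLM.hasDerivAt (x := s)).const_mul Ω
      exact h0.cexp
    have hW : HasDerivWithinAt (fun r => W (x, r))
        (I * m * dt1 (x, s) + (Ω - I * k) * dt2 (x, s)) (Set.Icc 0 T) s := by
      simpa only [hWdef, Pi.add_def] using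
        (((hT1 x hx s hs).const_mul (I * m)).add ((hT2 x hx s hs).const_mul (Ω - I * k)))
    have h := ((hexp.hasDerivWithinAt.mul hW).const_mul (Complex.exp (-I * k * x)))
    convert h using 1
    · rfl
    · rfl
    simp only [hU'def]
    ring
  -- derivative of the space slice of v
  have hVd : ∀ x ∈ Set.Icc (0:ℝ) L, ∀ s ∈ Set.Icc (0:ℝ) T,
      HasDerivWithinAt (fun y => v (y, s)) (V' (x, s)) (Set.Icc 0 L) x := by
    intro x hx s hs
    have hexp : HasDerivAt (fun y : ℝ => Complex.exp (-I * k * y))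
        (Complex.exp (-I * k * x) * (-I * k)) x := by
      have h0 : HasDerivAt (fun y : ℝ => -I * k * (y : ℂ)) (-I * k) x := by
        simpa using (Complex.ofRealCLM.hasDerivAt (x := x)).const_mul (-I * k)
      exact h0.cexp
    have hZ : HasDerivWithinAt (fun y => Z (y, s))
        (I * m * dx1 (x, s) + (I * k - Ω) * dx2 (x, s)) (Set.Icc 0 L) x := by
      simpa only [hZdef, Pi.add_def] using
        (((hX1 x hx s hs).const_mul (I * m)).add ((hX2 x hx s hs).const_mul (I * k - Ω)))
    have h := (hexp.hasDerivWithinAt.mul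
      (hZ.const_mul (Complex.exp (Ω * (s : ℂ)))))
    convert h using 1
    · rfl
    · rfl
    simp only [hV'def]
    ring
  -- continuity facts
  have hcΨ₁ : ContinuousOn Ψ₁ D := hΨ₁.continuousOn
  have hcΨ₂ : ContinuousOn Ψ₂ D := hΨ₂.continuousOn
  have hcdt1 : ContinuousOn dt1 D :=
    (hΨ₁.continuousOn_fderivWithin hUD le_rfl).clm_apply continuousOn_const
  have hcdt2 : ContinuousOn dt2 D :=
    (hΨ₂.continuousOn_fderivWithin hUD le_rfl).clm_apply continuousOn_const
  have hcdx1 : ContinuousOn dx1 D :=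
    (hΨ₁.continuousOn_fderivWithin hUD le_rfl).clm_apply continuousOn_const
  have hcdx2 : ContinuousOn dx2 D :=
    (hΨ₂.continuousOn_fderivWithin hUD le_rfl).clm_apply continuousOn_const
  have hcexp1 : Continuous fun p : ℝ × ℝ => Complex.exp (-I * k * p.1) := by fun_prop
  have hcexp2 : Continuous fun p : ℝ × ℝ => Complex.exp (Ω * p.2) := by fun_prop
  have hcW : ContinuousOn W D := (continuousOn_const.mul hcΨ₁).add (continuousOn_const.mul hcΨ₂)
  have hcZ : ContinuousOn Z D := (continuousOn_const.mul hcΨ₁).add (continuousOn_const.mul hcΨ₂)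
  have hcu : ContinuousOn u D :=
    hcexp1.continuousOn.mul (hcexp2.continuousOn.mul hcW)
  have hcv : ContinuousOn v D :=
    hcexp1.continuousOn.mul (hcexp2.continuousOn.mul hcZ)
  have hcU' : ContinuousOn U' D :=
    hcexp1.continuousOn.mul (hcexp2.continuousOn.mul ((continuousOn_const.mul hcW).add
      ((continuousOn_const.mul hcdt1).add (continuousOn_const.mul hcdt2))))
  have hcV' : ContinuousOn V' D :=
    hcexp1.continuousOn.mul (hcexp2.continuousOn.mul ((continuousOn_const.mul hcZ).add
      ((continuousOn_const.mul hcdx1).add (continuousOn_const.mul hcdx2))))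
  -- slice continuity helpers
  have hmapT : ∀ x ∈ Set.Icc (0:ℝ) L, Set.MapsTo (fun s : ℝ => ((x, s) : ℝ × ℝ))
      (Set.Icc 0 T) D := fun x hx s hs => ⟨hx, hs⟩
  have hmapX : ∀ s ∈ Set.Icc (0:ℝ) T, Set.MapsTo (fun x : ℝ => ((x, s) : ℝ × ℝ))
      (Set.Icc 0 L) D := fun s hs x hx => ⟨hx, hs⟩
  have hcontT : ∀ x : ℝ, Continuous (fun s : ℝ => ((x, s) : ℝ × ℝ)) := by fun_prop
  have hcontX : ∀ s : ℝ, Continuous (fun x : ℝ => ((x, s) : ℝ × ℝ)) := by fun_prop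
  have hIccT : Set.Icc (0:ℝ) t ⊆ Set.Icc 0 T := Set.Icc_subset_Icc le_rfl htT
  -- FTC in the time variable
  have hFTCs : ∀ x ∈ Set.Icc (0:ℝ) L,
      (∫ s in (0:ℝ)..t, U' (x, s)) = u (x, t) - u (x, 0) := by
    intro x hx
    apply integral_eq_sub_of_hasDeriv_right_of_le ht0
    · exact (hcu.comp (hcontT x).continuousOn
        ((hmapT x hx).mono_left hIccT)).mono (by intro s hs; exact hs)
    · intro s hs
      exact (hUd x hx s ⟨hs.1.le, hs.2.le.trans htT⟩).mono_of_mem_nhdsWithin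
        (Icc_mem_nhdsGT_of_mem ⟨hs.1.le, lt_of_lt_of_le hs.2 htT⟩)
    · apply ContinuousOn.intervalIntegrable
      rw [Set.uIcc_of_le ht0]
      exact (hcU'.comp (hcontT x).continuousOn ((hmapT x hx).mono_left hIccT))
  -- FTC in the space variable
  have hFTCx : ∀ s ∈ Set.Icc (0:ℝ) T,
      (∫ x in (0:ℝ)..L, V' (x, s)) = v (L, s) - v (0, s) := by
    intro s hs
    apply integral_eq_sub_of_hasDeriv_right_of_le hL.le
    · exact hcv.comp (hcontX s).continuousOn (hmapX s hs)
    · intro x hx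
      exact (hVd x ⟨hx.1.le, hx.2.le⟩ s hs).mono_of_mem_nhdsWithin
        (Icc_mem_nhdsGT_of_mem ⟨hx.1.le, hx.2⟩)
    · apply ContinuousOn.intervalIntegrable
      rw [Set.uIcc_of_le hL.le]
      exact hcV'.comp (hcontX s).continuousOn (hmapX s hs)
  -- Fubini for U' on the rectangle
  have hswap : (∫ x in (0:ℝ)..L, ∫ s in (0:ℝ)..t, U' (x, s))
      = ∫ s in (0:ℝ)..t, ∫ x in (0:ℝ)..L, U' (x, s) := by
    have hint : MeasureTheory.IntegrableOn U' (Set.Icc 0 L ×ˢ Set.Icc 0 t) := by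
      apply (hcU'.mono (Set.prod_mono_right hIccT)).integrableOn_compact
        (isCompact_Icc.prod isCompact_Icc)
    have hint2 : MeasureTheory.Integrable (Function.uncurry fun x s => U' (x, s))
        ((MeasureTheory.volume.restrict (Set.Ioc (0:ℝ) L)).prod
          (MeasureTheory.volume.restrict (Set.Ioc (0:ℝ) t))) := by
      rw [MeasureTheory.Measure.prod_restrict]
      refine MeasureTheory.IntegrableOn.mono ?_
        (Set.prod_mono Set.Ioc_subset_Icc_self Set.Ioc_subset_Icc_self) le_rfl
      rw [← MeasureTheory.Measure.volume_eq_prod]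
      exact hint
    rw [intervalIntegral.integral_of_le hL.le, intervalIntegral.integral_of_le ht0]
    simp_rw [intervalIntegral.integral_of_le hL.le, intervalIntegral.integral_of_le ht0]
    exact MeasureTheory.integral_integral_swap hint2
  -- interval integrability of the slices
  have hiInt : ∀ (f : ℝ × ℝ → ℂ), ContinuousOn f D → ∀ c ∈ Set.Icc (0:ℝ) T,
      IntervalIntegrable (fun x => f (x, c)) MeasureTheory.volume 0 L := by
    intro f hf c hc
    apply ContinuousOn.intervalIntegrable
    rw [Set.uIcc_of_le hL.le]
    exact hf.comp (hcontX c).continuousOn (hmapX c hc)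
  have hiIntT : ∀ (f : ℝ × ℝ → ℂ), ContinuousOn f D → ∀ a ∈ Set.Icc (0:ℝ) L,
      IntervalIntegrable (fun s => f (a, s)) MeasureTheory.volume 0 t := by
    intro f hf a ha
    apply ContinuousOn.intervalIntegrable
    rw [Set.uIcc_of_le ht0]
    exact hf.comp (hcontT a).continuousOn ((hmapT a ha).mono_left hIccT)
  have h0T : (0:ℝ) ∈ Set.Icc (0:ℝ) T := ⟨le_rfl, hT.le⟩
  have htTmem : t ∈ Set.Icc (0:ℝ) T := ⟨ht0, htT⟩
  have h0L : (0:ℝ) ∈ Set.Icc (0:ℝ) L := ⟨le_rfl, hL.le⟩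
  have hLL : L ∈ Set.Icc (0:ℝ) L := ⟨hL.le, le_rfl⟩
  have hg1 : ContinuousOn (fun p : ℝ × ℝ => Complex.exp (-I * k * p.1) * Ψ₁ p) D :=
    hcexp1.continuousOn.mul hcΨ₁
  have hg2 : ContinuousOn (fun p : ℝ × ℝ => Complex.exp (-I * k * p.1) * Ψ₂ p) D :=
    hcexp1.continuousOn.mul hcΨ₂
  have hg3 : ContinuousOn (fun p : ℝ × ℝ => Complex.exp (Ω * p.2) * Ψ₁ p) D :=
    hcexp2.continuousOn.mul hcΨ₁
  have hg4 : ContinuousOn (fun p : ℝ × ℝ => Complex.exp (Ω * p.2) * Ψ₂ p) D :=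
    hcexp2.continuousOn.mul hcΨ₂
  -- expansions of the four boundary integrals
  have hu0 : (∫ x in (0:ℝ)..L, u (x, 0)) =
      I * m * (∫ x in (0:ℝ)..L, Complex.exp (-I * k * x) * Ψ₁ (x, 0))
        + (Ω - I * k) * (∫ x in (0:ℝ)..L, Complex.exp (-I * k * x) * Ψ₂ (x, 0)) := by
    rw [intervalIntegral.integral_congr (g := fun x =>
        I * m * (Complex.exp (-I * k * x) * Ψ₁ (x, 0))
          + (Ω - I * k) * (Complex.exp (-I * k * x) * Ψ₂ (x, 0)))
      (fun x hx => by simp only [hudef, hWdef]; push_cast; rw [mul_zero, Complex.exp_zero]; ring)]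
    rw [intervalIntegral.integral_add ((hiInt _ hg1 0 h0T).const_mul _)
      ((hiInt _ hg2 0 h0T).const_mul _), intervalIntegral.integral_const_mul,
      intervalIntegral.integral_const_mul]
  have hut : (∫ x in (0:ℝ)..L, u (x, t)) =
      I * m * Complex.exp (Ω * t) * (∫ x in (0:ℝ)..L, Complex.exp (-I * k * x) * Ψ₁ (x, t))
        + (Ω - I * k) * Complex.exp (Ω * t) *
            (∫ x in (0:ℝ)..L, Complex.exp (-I * k * x) * Ψ₂ (x, t)) := by
    rw [intervalIntegral.integral_congr (g := fun x =>
        I * m * Complex.exp (Ω * t) * (Complex.exp (-I * k * x) * Ψ₁ (x, t))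
          + (Ω - I * k) * Complex.exp (Ω * t) * (Complex.exp (-I * k * x) * Ψ₂ (x, t)))
      (fun x hx => by simp only [hudef, hWdef]; ring)]
    rw [intervalIntegral.integral_add ((hiInt _ hg1 t htTmem).const_mul _)
      ((hiInt _ hg2 t htTmem).const_mul _), intervalIntegral.integral_const_mul,
      intervalIntegral.integral_const_mul]
  have hvL : (∫ s in (0:ℝ)..t, v (L, s)) =
      I * m * Complex.exp (-I * k * L) * (∫ s in (0:ℝ)..t, Complex.exp (Ω * s) * Ψ₁ (L, s))
        + (I * k - Ω) * Complex.exp (-I * k * L) *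
            (∫ s in (0:ℝ)..t, Complex.exp (Ω * s) * Ψ₂ (L, s)) := by
    rw [intervalIntegral.integral_congr (g := fun s =>
        I * m * Complex.exp (-I * k * L) * (Complex.exp (Ω * s) * Ψ₁ (L, s))
          + (I * k - Ω) * Complex.exp (-I * k * L) * (Complex.exp (Ω * s) * Ψ₂ (L, s)))
      (fun s hs => by simp only [hvdef, hZdef]; ring)]
    rw [intervalIntegral.integral_add ((hiIntT _ hg3 L hLL).const_mul _)
      ((hiIntT _ hg4 L hLL).const_mul _), intervalIntegral.integral_const_mul,
      intervalIntegral.integral_const_mul]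
  have hv0 : (∫ s in (0:ℝ)..t, v (0, s)) =
      I * m * (∫ s in (0:ℝ)..t, Complex.exp (Ω * s) * Ψ₁ (0, s))
        + (I * k - Ω) * (∫ s in (0:ℝ)..t, Complex.exp (Ω * s) * Ψ₂ (0, s)) := by
    rw [intervalIntegral.integral_congr (g := fun s =>
        I * m * (Complex.exp (Ω * s) * Ψ₁ (0, s))
          + (I * k - Ω) * (Complex.exp (Ω * s) * Ψ₂ (0, s)))
      (fun s hs => by
        simp only [hvdef, hZdef, Complex.ofReal_zero, mul_zero, Complex.exp_zero]; ring)]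
    rw [intervalIntegral.integral_add ((hiIntT _ hg3 0 h0L).const_mul _)
      ((hiIntT _ hg4 0 h0L).const_mul _), intervalIntegral.integral_const_mul,
      intervalIntegral.integral_const_mul]
  -- the Green's-theorem identity
  have hmain : (∫ x in (0:ℝ)..L, u (x, t)) - (∫ x in (0:ℝ)..L, u (x, 0))
      = (∫ s in (0:ℝ)..t, v (0, s)) - (∫ s in (0:ℝ)..t, v (L, s)) := by
    have e1 : (∫ x in (0:ℝ)..L, u (x, t)) - (∫ x in (0:ℝ)..L, u (x, 0))
        = ∫ x in (0:ℝ)..L, (u (x, t) - u (x, 0)) :=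
      (intervalIntegral.integral_sub (hiInt u hcu t htTmem) (hiInt u hcu 0 h0T)).symm
    have e2 : (∫ x in (0:ℝ)..L, (u (x, t) - u (x, 0)))
        = ∫ x in (0:ℝ)..L, ∫ s in (0:ℝ)..t, U' (x, s) := by
      apply intervalIntegral.integral_congr
      intro x hx
      rw [Set.uIcc_of_le hL.le] at hx
      exact (hFTCs x hx).symm
    have e3 : (∫ s in (0:ℝ)..t, ∫ x in (0:ℝ)..L, U' (x, s))
        = ∫ s in (0:ℝ)..t, (v (0, s) - v (L, s)) := by
      apply intervalIntegral.integral_congr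
      intro s hs
      rw [Set.uIcc_of_le ht0] at hs
      have hsT : s ∈ Set.Icc (0:ℝ) T := hIccT hs
      show (∫ x in (0:ℝ)..L, U' (x, s)) = v (0, s) - v (L, s)
      have e4 : (∫ x in (0:ℝ)..L, U' (x, s)) = ∫ x in (0:ℝ)..L, -V' (x, s) := by
        apply intervalIntegral.integral_congr
        intro x hx
        rw [Set.uIcc_of_le hL.le] at hx
        exact hlocal x hx s hsT
      rw [e4, intervalIntegral.integral_neg, hFTCx s hsT]
      ring
    have e5 : (∫ s in (0:ℝ)..t, (v (0, s) - v (L, s)))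
        = (∫ s in (0:ℝ)..t, v (0, s)) - (∫ s in (0:ℝ)..t, v (L, s)) :=
      intervalIntegral.integral_sub (hiIntT v hcv 0 h0L) (hiIntT v hcv L hLL)
    rw [e1, e2, hswap, e3, e5]
  rw [hut, hu0, hv0, hvL] at hmain
  linear_combination -hmain
end

section
/- Let T > 0, m > 0, and let Ψ₁, Ψ₂ : (−∞,0]×[0,T] → ℂ be continuously differentiable and satisfy i ∂ₜΨ₁ = −i ∂ₓΨ₁ + m Ψ₂ and i ∂ₜΨ₂ = i ∂ₓΨ₂ + m Ψ₁. Assume that Ψₗ(·,s), ∂ₓΨₗ(·,s) and ∂ₜΨₗ(·,s) are integrable on (−∞,0] for each s ∈ [0,T], that Ψₗ(x,s) → 0 as x → −∞ for each s, and that |∂ₜΨₗ(x,s)| is dominated, uniformly for s ∈ [0,T], by an integrable function of x (l = 1,2). For real k and s ∈ [0,T] write Ψ̂ₗ(k,s) = ∫_{−∞}^0 e^{−ikx} Ψₗ(x,s) dx and h₀,ₗ(Ω,t) = ∫_0^t e^{Ωs} Ψₗ(0,s) ds. Then for every k ∈ ℝ, every Ω ∈ ℂ with Ω² = −(k²+m²),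 and every t ∈ [0,T]: (ik − Ω) e^{Ωt} Ψ̂₂(k,t) − i m h₀,₁(Ω,t) − i m e^{Ωt} Ψ̂₁(k,t) + i m Ψ̂₁(k,0) + (Ω − ik) Ψ̂₂(k,0) + (Ω − ik) h₀,₂(Ω,t) = 0. -/
open MeasureTheory Filter intervalIntegral

section DiracAux
open Set

lemma aux_sliceT {T : ℝ} (hT : 0 < T) (Ψ : ℝ × ℝ → ℂ)
    (hΨ : ContDiffOn ℝ 1 Ψ (Set.Iic 0 ×ˢ Set.Icc 0 T))
    {x s : ℝ} (hx : x ∈ Set.Iic (0:ℝ)) (hs : s ∈ Set.Icc (0:ℝ) T) :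
    HasDerivWithinAt (fun r => Ψ (x, r))
      (derivWithin (fun r => Ψ (x, r)) (Set.Icc 0 T) s) (Set.Icc 0 T) s ∧
    derivWithin (fun r => Ψ (x, r)) (Set.Icc 0 T) s
      = fderivWithin ℝ Ψ (Set.Iic 0 ×ˢ Set.Icc 0 T) (x, s) (0, 1) := by
  have hmem : (x, s) ∈ Set.Iic (0:ℝ) ×ˢ Set.Icc (0:ℝ) T := ⟨hx, hs⟩
  have hF := ((hΨ.differentiableOn one_ne_zero) (x, s) hmem).hasFDerivWithinAt
  have hc : HasDerivWithinAt (fun r : ℝ => ((x, r) : ℝ × ℝ)) ((0:ℝ), (1:ℝ)) (Set.Icc 0 T) s :=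
    ((hasDerivAt_const s x).prodMk (hasDerivAt_id s)).hasDerivWithinAt
  have hmaps : Set.MapsTo (fun r : ℝ => ((x, r) : ℝ × ℝ)) (Set.Icc 0 T)
      (Set.Iic 0 ×ˢ Set.Icc 0 T) := fun r hr => ⟨hx, hr⟩
  have hD : HasDerivWithinAt (fun r => Ψ (x, r))
      (fderivWithin ℝ Ψ (Set.Iic 0 ×ˢ Set.Icc 0 T) (x, s) (0, 1)) (Set.Icc 0 T) s :=
    hF.comp_hasDerivWithinAt s hc hmaps
  have heq := hD.derivWithin ((uniqueDiffOn_Icc hT) s hs)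
  exact ⟨heq ▸ hD, heq⟩

lemma aux_sliceX {T : ℝ} (hT : 0 < T) (Ψ : ℝ × ℝ → ℂ)
    (hΨ : ContDiffOn ℝ 1 Ψ (Set.Iic 0 ×ˢ Set.Icc 0 T))
    {x s : ℝ} (hx : x ∈ Set.Iic (0:ℝ)) (hs : s ∈ Set.Icc (0:ℝ) T) :
    HasDerivWithinAt (fun y => Ψ (y, s))
      (derivWithin (fun y => Ψ (y, s)) (Set.Iic 0) x) (Set.Iic 0) x ∧
    derivWithin (fun y => Ψ (y, s)) (Set.Iic 0) x
      = fderivWithin ℝ Ψ (Set.Iic 0 ×ˢ Set.Icc 0 T) (x, s) (1, 0) := by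
  have hmem : (x, s) ∈ Set.Iic (0:ℝ) ×ˢ Set.Icc (0:ℝ) T := ⟨hx, hs⟩
  have hF := ((hΨ.differentiableOn one_ne_zero) (x, s) hmem).hasFDerivWithinAt
  have hc : HasDerivWithinAt (fun y : ℝ => ((y, s) : ℝ × ℝ)) ((1:ℝ), (0:ℝ)) (Set.Iic 0) x :=
    ((hasDerivAt_id x).prodMk (hasDerivAt_const x s)).hasDerivWithinAt
  have hmaps : Set.MapsTo (fun y : ℝ => ((y, s) : ℝ × ℝ)) (Set.Iic 0)
      (Set.Iic 0 ×ˢ Set.Icc 0 T) := fun y hy => ⟨hy, hs⟩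
  have hD : HasDerivWithinAt (fun y => Ψ (y, s))
      (fderivWithin ℝ Ψ (Set.Iic 0 ×ˢ Set.Icc 0 T) (x, s) (1, 0)) (Set.Iic 0) x :=
    hF.comp_hasDerivWithinAt x hc hmaps
  have heq := hD.derivWithin ((uniqueDiffOn_Iic 0) x hx)
  exact ⟨heq ▸ hD, heq⟩

lemma aux_contDt {T : ℝ} (hT : 0 < T) (Ψ : ℝ × ℝ → ℂ)
    (hΨ : ContDiffOn ℝ 1 Ψ (Set.Iic 0 ×ˢ Set.Icc 0 T)) :
    ContinuousOn (fun p : ℝ × ℝ => derivWithin (fun r => Ψ (p.1, r)) (Set.Icc 0 T) p.2)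
      (Set.Iic 0 ×ˢ Set.Icc 0 T) := by
  have hSu : UniqueDiffOn ℝ (Set.Iic (0:ℝ) ×ˢ Set.Icc (0:ℝ) T) :=
    (uniqueDiffOn_Iic 0).prod (uniqueDiffOn_Icc hT)
  have h1 : ContinuousOn (fun p : ℝ × ℝ =>
      fderivWithin ℝ Ψ (Set.Iic 0 ×ˢ Set.Icc 0 T) p ((0:ℝ), (1:ℝ)))
      (Set.Iic 0 ×ˢ Set.Icc 0 T) :=
    (hΨ.continuousOn_fderivWithin hSu le_rfl).clm_apply continuousOn_const
  exact h1.congr fun p hp => (aux_sliceT hT Ψ hΨ hp.1 hp.2).2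


lemma aux_expderiv (c : ℂ) (s : ℝ) :
    HasDerivAt (fun r : ℝ => Complex.exp (c * r)) (c * Complex.exp (c * s)) s := by
  have h0 : HasDerivAt (fun r : ℝ => (r : ℂ)) 1 s := by
    simpa using (hasDerivAt_id s).ofReal_comp
  have h1 : HasDerivAt (fun r : ℝ => c * (r : ℂ)) c s := by
    simpa using h0.const_mul c
  simpa [mul_comm] using h1.cexp

lemma aux_normE (k x : ℝ) : ‖Complex.exp (-Complex.I * k * x)‖ = 1 := by
  rw [Complex.norm_exp]
  simp [Complex.mul_re]

lemma aux_norme {Ω : ℂ} {T s : ℝ} (hs : s ∈ Set.Icc 0 T) :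
    ‖Complex.exp (Ω * s)‖ ≤ Real.exp (|Ω.re| * T) := by
  rw [Complex.norm_exp]
  apply Real.exp_le_exp.2
  have : (Ω * (s:ℂ)).re = Ω.re * s := by simp [Complex.mul_re]
  rw [this]
  calc Ω.re * s ≤ |Ω.re| * s := mul_le_mul_of_nonneg_right (le_abs_self _) hs.1
    _ ≤ |Ω.re| * T := mul_le_mul_of_nonneg_left hs.2 (abs_nonneg _)


/-- half-line integration by parts / FTC in x. -/
lemma aux_xftc {T : ℝ} (hT : 0 < T) (k : ℝ) (Ψ : ℝ × ℝ → ℂ)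
    (hΨ : ContDiffOn ℝ 1 Ψ (Set.Iic 0 ×ˢ Set.Icc 0 T))
    {s : ℝ} (hs : s ∈ Set.Icc (0:ℝ) T)
    (hint1 : IntegrableOn (fun x => Ψ (x, s)) (Set.Iic 0))
    (hint2 : IntegrableOn (fun x => derivWithin (fun y : ℝ => Ψ (y, s)) (Set.Iic 0) x)
      (Set.Iic 0))
    (hdec : Tendsto (fun x => Ψ (x, s)) atBot (nhds 0)) :
    ∫ x in Set.Iic (0:ℝ), Complex.exp (-Complex.I * k * x) *
        derivWithin (fun y : ℝ => Ψ (y, s)) (Set.Iic 0) x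
      = Ψ (0, s) + Complex.I * k *
          ∫ x in Set.Iic (0:ℝ), Complex.exp (-Complex.I * k * x) * Ψ (x, s) := by
  set E : ℝ → ℂ := fun x => Complex.exp (-Complex.I * k * x) with hE
  set D : ℝ → ℂ := fun x => derivWithin (fun y : ℝ => Ψ (y, s)) (Set.Iic 0) x with hD
  have hEcont : Continuous E := by
    exact Complex.continuous_exp.comp (by continuity)
  have hEb : ∃ C, ∀ x, ‖E x‖ ≤ C := ⟨1, fun x => le_of_eq (aux_normE k x)⟩
  -- continuity of x ↦ Ψ (x,s) on Iic 0
  have hΨc : ContinuousOn (fun x => Ψ (x, s)) (Set.Iic 0) := by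
    have := hΨ.continuousOn
    exact this.comp (Continuous.continuousOn (by continuity)) (fun x hx => ⟨hx, hs⟩)
  -- the function and its derivative
  have hf' : ∀ x ∈ Set.Iio (0:ℝ), HasDerivAt (fun y => E y * Ψ (y, s))
      (-Complex.I * k * E x * Ψ (x, s) + E x * D x) x := by
    intro x hx
    have h1 : HasDerivAt E (-Complex.I * k * E x) x := aux_expderiv _ x
    have h2 : HasDerivAt (fun y => Ψ (y, s)) (D x) x :=
      (aux_sliceX hT Ψ hΨ (Set.mem_Iic.mpr (le_of_lt hx)) hs).1.hasDerivAt (Iic_mem_nhds hx)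
    exact h1.mul h2
  have hfc : ContinuousWithinAt (fun y => E y * Ψ (y, s)) (Set.Iic 0) 0 :=
    ((hEcont.continuousOn).mul hΨc) 0 (le_refl (0:ℝ))
  have hfint : IntegrableOn
      (fun x => -Complex.I * k * E x * Ψ (x, s) + E x * D x) (Set.Iic 0) := by
    apply Integrable.add
    · have : IntegrableOn (fun x => E x * Ψ (x, s)) (Set.Iic 0) :=
        hint1.bdd_mul hEcont.aestronglyMeasurable (ae_of_all _ hEb.choose_spec)
      simpa [mul_assoc] using this.const_mul (-Complex.I * k)
    · exact hint2.bdd_mul hEcont.aestronglyMeasurable (ae_of_all _ hEb.choose_spec)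
  have htend : Tendsto (fun x => E x * Ψ (x, s)) atBot (nhds 0) := by
    apply squeeze_zero_norm (a := fun x => ‖Ψ (x, s)‖)
    · intro x
      rw [norm_mul, aux_normE k x, one_mul]
    · simpa using hdec.norm
  have key := MeasureTheory.integral_Iic_of_hasDerivAt_of_tendsto hfc hf' hfint htend
  rw [sub_zero] at key
  have hEΨint : IntegrableOn (fun x => E x * Ψ (x, s)) (Set.Iic 0) :=
    hint1.bdd_mul hEcont.aestronglyMeasurable (ae_of_all _ hEb.choose_spec)
  have hEDint : IntegrableOn (fun x => E x * D x) (Set.Iic 0) :=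
    hint2.bdd_mul hEcont.aestronglyMeasurable (ae_of_all _ hEb.choose_spec)
  have split : ∫ x in Set.Iic (0:ℝ), (-Complex.I * k * E x * Ψ (x, s) + E x * D x)
      = -Complex.I * k * (∫ x in Set.Iic (0:ℝ), E x * Ψ (x, s))
        + ∫ x in Set.Iic (0:ℝ), E x * D x := by
    rw [MeasureTheory.integral_add _ hEDint]
    · congr 1
      rw [← MeasureTheory.integral_const_mul]
      congr 1; funext x; ring
    · have := hEΨint.const_mul (-Complex.I * k)
      simpa [mul_assoc] using this
  rw [split] at key
  have hE0 : E 0 = 1 := by simp [hE]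
  rw [hE0, one_mul] at key
  linear_combination key

lemma aux_sliceTcont {T : ℝ} (hT : 0 < T) (Ψ : ℝ × ℝ → ℂ)
    (hΨ : ContDiffOn ℝ 1 Ψ (Set.Iic 0 ×ˢ Set.Icc 0 T)) {x : ℝ} (hx : x ∈ Set.Iic (0:ℝ)) :
    ContinuousOn (fun s => Ψ (x, s)) (Set.Icc 0 T) ∧
    ContinuousOn (fun s => derivWithin (fun r => Ψ (x, r)) (Set.Icc 0 T) s)
      (Set.Icc 0 T) := by
  constructor
  · exact hΨ.continuousOn.comp
      ((continuous_const.prodMk continuous_id).continuousOn :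
        ContinuousOn (fun s : ℝ => ((x, s) : ℝ × ℝ)) (Set.Icc 0 T))
      (fun s hs => ⟨hx, hs⟩)
  · exact (aux_contDt hT Ψ hΨ).comp
      ((continuous_const.prodMk continuous_id).continuousOn :
        ContinuousOn (fun s : ℝ => ((x, s) : ℝ × ℝ)) (Set.Icc 0 T))
      (fun s hs => ⟨hx, hs⟩)


lemma aux_ftc_s {T : ℝ} (hT : 0 < T) (Ψ : ℝ × ℝ → ℂ)
    (hΨ : ContDiffOn ℝ 1 Ψ (Set.Iic 0 ×ˢ Set.Icc 0 T)) (c : ℂ)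
    {x s : ℝ} (hx : x ∈ Set.Iic (0:ℝ)) (hs : s ∈ Set.Icc (0:ℝ) T) :
    ∫ r in (0:ℝ)..s, Complex.exp (c * r) *
        (c * Ψ (x, r) + derivWithin (fun u => Ψ (x, u)) (Set.Icc 0 T) r)
      = Complex.exp (c * s) * Ψ (x, s) - Ψ (x, 0) := by
  have hcont := aux_sliceTcont hT Ψ hΨ hx
  have hIcc : Set.Icc (0:ℝ) s ⊆ Set.Icc (0:ℝ) T := Set.Icc_subset_Icc_right hs.2
  have key : ∫ r in (0:ℝ)..s, Complex.exp (c * r) *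
      (c * Ψ (x, r) + derivWithin (fun u => Ψ (x, u)) (Set.Icc 0 T) r)
      = Complex.exp (c * s) * Ψ (x, s) - Complex.exp (c * 0) * Ψ (x, 0) := by
    apply intervalIntegral.integral_eq_sub_of_hasDeriv_right_of_le hs.1
    · exact (Complex.continuous_exp.comp (by continuity)).continuousOn.mul
        (hcont.1.mono hIcc)
    · intro r hr
      have hrT : r ∈ Set.Icc (0:ℝ) T := ⟨le_of_lt hr.1, le_trans (le_of_lt hr.2) hs.2⟩
      have hrT' : r ∈ Set.Ioo (0:ℝ) T := ⟨hr.1, lt_of_lt_of_le hr.2 hs.2⟩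
      have h1 : HasDerivAt (fun u : ℝ => Complex.exp (c * u)) (c * Complex.exp (c * r)) r :=
        aux_expderiv c r
      have h2 : HasDerivAt (fun u => Ψ (x, u))
          (derivWithin (fun u => Ψ (x, u)) (Set.Icc 0 T) r) r :=
        (aux_sliceT hT Ψ hΨ hx hrT).1.hasDerivAt (Icc_mem_nhds hrT'.1 hrT'.2)
      have : HasDerivAt (fun u : ℝ => Complex.exp (c * u) * Ψ (x, u)) _ r := h1.mul h2
      apply HasDerivAt.hasDerivWithinAt
      exact this.congr_deriv (by ring)
    · apply ContinuousOn.intervalIntegrable_of_Icc hs.1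
      exact (Complex.continuous_exp.comp (by continuity)).continuousOn.mul
        (((hcont.1.mono hIcc).const_smul c).add (hcont.2.mono hIcc))
  simpa using key


lemma aux_dombound {T : ℝ} (hT : 0 < T) (Ψ : ℝ × ℝ → ℂ)
    (hΨ : ContDiffOn ℝ 1 Ψ (Set.Iic 0 ×ˢ Set.Icc 0 T)) (g : ℝ → ℝ)
    (hgb : ∀ s ∈ Set.Icc (0:ℝ) T, ∀ x ∈ Set.Iic (0:ℝ),
      ‖derivWithin (fun r : ℝ => Ψ (x, r)) (Set.Icc 0 T) s‖ ≤ g x) :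
    ∀ s ∈ Set.Icc (0:ℝ) T, ∀ x ∈ Set.Iic (0:ℝ),
      ‖Ψ (x, s)‖ ≤ ‖Ψ (x, 0)‖ + T * g x := by
  intro s hs x hx
  have key := aux_ftc_s hT Ψ hΨ 0 hx hs
  simp only [zero_mul, Complex.exp_zero, one_mul, zero_mul] at key
  -- key : ∫ r in 0..s, (0*... + D) = Ψ (x,s) - Ψ (x,0), need to simplify integrand
  have key2 : ∫ r in (0:ℝ)..s, derivWithin (fun u => Ψ (x, u)) (Set.Icc 0 T) r
      = Ψ (x, s) - Ψ (x, 0) := by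
    rw [← key]
    apply intervalIntegral.integral_congr
    intro r _; simp
  have hgx : (0:ℝ) ≤ g x := le_trans (norm_nonneg _) (hgb s hs x hx)
  have hb : ‖∫ r in (0:ℝ)..s, derivWithin (fun u => Ψ (x, u)) (Set.Icc 0 T) r‖
      ≤ g x * |s - 0| := by
    apply intervalIntegral.norm_integral_le_of_norm_le_const
    intro r hr
    rw [Set.uIoc_of_le hs.1] at hr
    exact hgb r ⟨le_of_lt hr.1, le_trans hr.2 hs.2⟩ x hx
  rw [key2] at hb
  have habs : |s - 0| ≤ T := by
    rw [sub_zero, abs_of_nonneg hs.1]; exact hs.2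
  calc ‖Ψ (x, s)‖ = ‖Ψ (x, 0) + (Ψ (x, s) - Ψ (x, 0))‖ := by ring_nf
    _ ≤ ‖Ψ (x, 0)‖ + ‖Ψ (x, s) - Ψ (x, 0)‖ := norm_add_le _ _
    _ ≤ ‖Ψ (x, 0)‖ + g x * |s - 0| := by linarith
    _ ≤ ‖Ψ (x, 0)‖ + T * g x := by
        have : g x * |s - 0| ≤ g x * T := mul_le_mul_of_nonneg_left habs hgx
        nlinarith


lemma aux_fubini {T : ℝ} (hT : 0 < T) (Ω : ℂ) (k : ℝ) (Ψ : ℝ × ℝ → ℂ)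
    (hΨ : ContDiffOn ℝ 1 Ψ (Set.Iic 0 ×ˢ Set.Icc 0 T))
    (hint : ∀ s ∈ Set.Icc (0:ℝ) T, IntegrableOn (fun x => Ψ (x, s)) (Set.Iic 0))
    (g : ℝ → ℝ) (hg : IntegrableOn g (Set.Iic 0))
    (hgb : ∀ s ∈ Set.Icc (0:ℝ) T, ∀ x ∈ Set.Iic (0:ℝ),
      ‖derivWithin (fun r : ℝ => Ψ (x, r)) (Set.Icc 0 T) s‖ ≤ g x)
    {t : ℝ} (ht : t ∈ Set.Icc (0:ℝ) T) :
    ∫ s in Set.Ioc (0:ℝ) t, (∫ x in Set.Iic (0:ℝ),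
        Complex.exp (Ω * s) * Complex.exp (-Complex.I * k * x) *
          (Ω * Ψ (x, s) + derivWithin (fun u : ℝ => Ψ (x, u)) (Set.Icc 0 T) s))
      = Complex.exp (Ω * t) *
          (∫ x in Set.Iic (0:ℝ), Complex.exp (-Complex.I * k * x) * Ψ (x, t))
        - ∫ x in Set.Iic (0:ℝ), Complex.exp (-Complex.I * k * x) * Ψ (x, 0) := by
  have h0T : (0:ℝ) ∈ Set.Icc (0:ℝ) T := ⟨le_refl _, le_of_lt hT⟩
  set D : ℝ × ℝ → ℂ := fun z => derivWithin (fun u : ℝ => Ψ (z.1, u)) (Set.Icc 0 T) z.2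
    with hD
  set F : ℝ × ℝ → ℂ := fun z =>
    Complex.exp (Ω * z.2) * Complex.exp (-Complex.I * k * z.1) * (Ω * Ψ z + D z) with hF
  set W : ℝ → ℝ := fun x =>
    Real.exp (|Ω.re| * T) * (‖Ω‖ * (‖Ψ (x, 0)‖ + T * g x) + g x) with hW
  have hWint : IntegrableOn W (Set.Iic 0) := by
    apply Integrable.const_mul
    exact ((((hint 0 h0T).norm.add (hg.const_mul T)).const_mul ‖Ω‖).add hg)
  -- continuity of F on the strip
  have hcontF : ContinuousOn F (Set.Iic 0 ×ˢ Set.Icc 0 T) := by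
    apply ContinuousOn.mul
    · exact ((Complex.continuous_exp.comp (continuous_const.mul
        (Complex.continuous_ofReal.comp continuous_snd))).mul
        (Complex.continuous_exp.comp (continuous_const.mul
        (Complex.continuous_ofReal.comp continuous_fst)))).continuousOn
    · exact (continuousOn_const.mul hΨ.continuousOn).add (aux_contDt hT Ψ hΨ)
  -- measurability wrt the product of restricted measures
  haveI : IsFiniteMeasure (volume.restrict (Set.Ioc (0:ℝ) t)) :=
    ⟨by rw [Measure.restrict_apply_univ]; exact measure_Ioc_lt_top⟩
  have hsub : (Set.Iic (0:ℝ) ×ˢ Set.Ioc (0:ℝ) t) ⊆ (Set.Iic (0:ℝ) ×ˢ Set.Icc (0:ℝ) T) :=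
    Set.prod_mono subset_rfl (fun s hs => ⟨le_of_lt hs.1, le_trans hs.2 ht.2⟩)
  have hmeas : AEStronglyMeasurable F
      ((volume.restrict (Set.Iic (0:ℝ))).prod (volume.restrict (Set.Ioc (0:ℝ) t))) := by
    have h1 : AEStronglyMeasurable F
        ((volume : Measure (ℝ × ℝ)).restrict (Set.Iic 0 ×ˢ Set.Icc 0 T)) :=
      hcontF.aestronglyMeasurable (measurableSet_Iic.prod measurableSet_Icc)
    have h2 : (volume.restrict (Set.Iic (0:ℝ))).prod (volume.restrict (Set.Ioc (0:ℝ) t))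
        = (volume : Measure (ℝ × ℝ)).restrict (Set.Iic 0 ×ˢ Set.Ioc 0 t) := by
      rw [Measure.prod_restrict, ← Measure.volume_eq_prod]
    rw [h2]
    exact h1.mono_measure (Measure.restrict_mono hsub le_rfl)
  -- integrability
  have hΨb := aux_dombound hT Ψ hΨ g hgb
  have haemem : ∀ᵐ z ∂((volume.restrict (Set.Iic (0:ℝ))).prod
      (volume.restrict (Set.Ioc (0:ℝ) t))), z ∈ Set.Iic (0:ℝ) ×ˢ Set.Ioc (0:ℝ) t := by
    rw [Measure.prod_restrict, ← Measure.volume_eq_prod]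
    exact ae_restrict_mem (measurableSet_Iic.prod measurableSet_Ioc)
  have hWfst : Integrable (fun z : ℝ × ℝ => W z.1)
      ((volume.restrict (Set.Iic (0:ℝ))).prod (volume.restrict (Set.Ioc (0:ℝ) t))) := by
    rw [integrable_prod_iff (hWint.aestronglyMeasurable.comp_fst)]
    constructor
    · exact Eventually.of_forall fun x => by simpa using integrable_const (μ := volume.restrict (Set.Ioc (0:ℝ) t)) (W x)
    · simp only [MeasureTheory.integral_const, smul_eq_mul]
      exact hWint.norm.const_mul _
  have hInt : Integrable F
      ((volume.restrict (Set.Iic (0:ℝ))).prod (volume.restrict (Set.Ioc (0:ℝ) t))) := by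
    apply Integrable.mono' hWfst hmeas
    filter_upwards [haemem] with z hz
    have hsT : z.2 ∈ Set.Icc (0:ℝ) T := ⟨le_of_lt hz.2.1, le_trans hz.2.2 ht.2⟩
    have h1 : ‖Complex.exp (Ω * z.2)‖ ≤ Real.exp (|Ω.re| * T) := aux_norme hsT
    have h2 : ‖Ψ (z.1, z.2)‖ ≤ ‖Ψ (z.1, 0)‖ + T * g z.1 := hΨb z.2 hsT z.1 hz.1
    have h3 : ‖D z‖ ≤ g z.1 := hgb z.2 hsT z.1 hz.1
    have h4 : ‖Ω * Ψ z + D z‖ ≤ ‖Ω‖ * (‖Ψ (z.1, 0)‖ + T * g z.1) + g z.1 := by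
      refine (norm_add_le _ _).trans (add_le_add ?_ h3)
      rw [norm_mul]
      exact mul_le_mul_of_nonneg_left h2 (norm_nonneg Ω)
    calc ‖F z‖ = ‖Complex.exp (Ω * z.2)‖ * ‖Complex.exp (-Complex.I * k * z.1)‖
          * ‖Ω * Ψ z + D z‖ := by rw [hF]; rw [norm_mul, norm_mul]
      _ = ‖Complex.exp (Ω * z.2)‖ * ‖Ω * Ψ z + D z‖ := by
          rw [aux_normE k z.1, mul_one]
      _ ≤ Real.exp (|Ω.re| * T) * (‖Ω‖ * (‖Ψ (z.1, 0)‖ + T * g z.1) + g z.1) :=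
          mul_le_mul h1 h4 (norm_nonneg _) (Real.exp_nonneg _)
      _ = W z.1 := rfl
  -- swap
  have swap := MeasureTheory.integral_integral_swap (f := fun x s => F (x, s)) hInt
  -- compute the inner s-integral for each x
  have inner : ∀ x ∈ Set.Iic (0:ℝ), (∫ s in Set.Ioc (0:ℝ) t, F (x, s))
      = Complex.exp (-Complex.I * k * x) *
          (Complex.exp (Ω * t) * Ψ (x, t) - Ψ (x, 0)) := by
    intro x hx
    rw [← intervalIntegral.integral_of_le ht.1]
    have hcongr : ∫ s in (0:ℝ)..t, F (x, s)
        = ∫ s in (0:ℝ)..t, Complex.exp (-Complex.I * k * x) *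
            (Complex.exp (Ω * s) *
              (Ω * Ψ (x, s) + derivWithin (fun u : ℝ => Ψ (x, u)) (Set.Icc 0 T) s)) := by
      apply intervalIntegral.integral_congr
      intro s _
      simp only [hF, hD]
      ring
    rw [hcongr, intervalIntegral.integral_const_mul]
    congr 1
    exact aux_ftc_s hT Ψ hΨ Ω hx ht
  -- the x-integral of the result
  have hEb : ∃ C, ∀ x : ℝ, ‖Complex.exp (-Complex.I * k * x)‖ ≤ C :=
    ⟨1, fun x => le_of_eq (aux_normE k x)⟩
  have hEcont : Continuous fun x : ℝ => Complex.exp (-Complex.I * k * x) :=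
    Complex.continuous_exp.comp (continuous_const.mul Complex.continuous_ofReal)
  have hintt : IntegrableOn (fun x : ℝ => Complex.exp (-Complex.I * k * x) * Ψ (x, t))
      (Set.Iic 0) := (hint t ht).bdd_mul hEcont.aestronglyMeasurable (ae_of_all _ hEb.choose_spec)
  have hint0 : IntegrableOn (fun x : ℝ => Complex.exp (-Complex.I * k * x) * Ψ (x, 0))
      (Set.Iic 0) := (hint 0 h0T).bdd_mul hEcont.aestronglyMeasurable (ae_of_all _ hEb.choose_spec)
  have outer : (∫ x in Set.Iic (0:ℝ), Complex.exp (-Complex.I * k * x) *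
        (Complex.exp (Ω * t) * Ψ (x, t) - Ψ (x, 0)))
      = Complex.exp (Ω * t) *
          (∫ x in Set.Iic (0:ℝ), Complex.exp (-Complex.I * k * x) * Ψ (x, t))
        - ∫ x in Set.Iic (0:ℝ), Complex.exp (-Complex.I * k * x) * Ψ (x, 0) := by
    have hstep : (∫ x in Set.Iic (0:ℝ), Complex.exp (-Complex.I * k * x) *
          (Complex.exp (Ω * t) * Ψ (x, t) - Ψ (x, 0)))
        = ∫ x in Set.Iic (0:ℝ), (Complex.exp (Ω * t) *
            (Complex.exp (-Complex.I * k * x) * Ψ (x, t))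
          - Complex.exp (-Complex.I * k * x) * Ψ (x, 0)) := by
      apply setIntegral_congr_fun measurableSet_Iic
      intro x _
      ring
    rw [hstep, MeasureTheory.integral_sub (hintt.const_mul _) hint0, MeasureTheory.integral_const_mul]
  -- put everything together
  calc ∫ s in Set.Ioc (0:ℝ) t, (∫ x in Set.Iic (0:ℝ),
        Complex.exp (Ω * s) * Complex.exp (-Complex.I * k * x) *
          (Ω * Ψ (x, s) + derivWithin (fun u : ℝ => Ψ (x, u)) (Set.Icc 0 T) s))
      = ∫ s in Set.Ioc (0:ℝ) t, (∫ x in Set.Iic (0:ℝ), F (x, s)) := rfl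
    _ = ∫ x in Set.Iic (0:ℝ), (∫ s in Set.Ioc (0:ℝ) t, F (x, s)) := swap.symm
    _ = ∫ x in Set.Iic (0:ℝ), Complex.exp (-Complex.I * k * x) *
          (Complex.exp (Ω * t) * Ψ (x, t) - Ψ (x, 0)) :=
        setIntegral_congr_fun measurableSet_Iic inner
    _ = _ := outer

end DiracAux

section DiracMain
open Set

/-- Global relation for a continuously differentiable, decaying solution of the massive
Dirac system on the negative half-line `(-∞,0]` up to time `T`, for any branch `Ω` of
the dispersion relation `Ω² = -(k² + m²)`. -/
theorem massive_dirac_global_relation_neg_halfline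
    (T m : ℝ) (hT : 0 < T) (hm : 0 < m)
    (Ψ₁ Ψ₂ : ℝ × ℝ → ℂ)
    (hΨ₁ : ContDiffOn ℝ 1 Ψ₁ (Set.Iic 0 ×ˢ Set.Icc 0 T))
    (hΨ₂ : ContDiffOn ℝ 1 Ψ₂ (Set.Iic 0 ×ˢ Set.Icc 0 T))
    (pde₁ : ∀ x ∈ Set.Iic (0:ℝ), ∀ t ∈ Set.Icc (0:ℝ) T,
        Complex.I * derivWithin (fun s : ℝ => Ψ₁ (x, s)) (Set.Icc 0 T) t =
          -Complex.I * derivWithin (fun y : ℝ => Ψ₁ (y, t)) (Set.Iic 0) x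
            + m * Ψ₂ (x, t))
    (pde₂ : ∀ x ∈ Set.Iic (0:ℝ), ∀ t ∈ Set.Icc (0:ℝ) T,
        Complex.I * derivWithin (fun s : ℝ => Ψ₂ (x, s)) (Set.Icc 0 T) t =
          Complex.I * derivWithin (fun y : ℝ => Ψ₂ (y, t)) (Set.Iic 0) x
            + m * Ψ₁ (x, t))
    (hint : ∀ Ψ ∈ [Ψ₁, Ψ₂], ∀ s ∈ Set.Icc (0:ℝ) T,
        IntegrableOn (fun x => Ψ (x, s)) (Set.Iic 0) ∧
        IntegrableOn (fun x => derivWithin (fun y : ℝ => Ψ (y, s)) (Set.Iic 0) x)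
          (Set.Iic 0) ∧
        IntegrableOn (fun x => derivWithin (fun r : ℝ => Ψ (x, r)) (Set.Icc 0 T) s)
          (Set.Iic 0))
    (hdecay : ∀ Ψ ∈ [Ψ₁, Ψ₂], ∀ s ∈ Set.Icc (0:ℝ) T,
        Tendsto (fun x => Ψ (x, s)) atBot (nhds 0))
    (hdom : ∀ Ψ ∈ [Ψ₁, Ψ₂], ∃ g : ℝ → ℝ, IntegrableOn g (Set.Iic 0) ∧
        ∀ s ∈ Set.Icc (0:ℝ) T, ∀ x ∈ Set.Iic (0:ℝ),
          ‖derivWithin (fun r : ℝ => Ψ (x, r)) (Set.Icc 0 T) s‖ ≤ g x) :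
    ∀ (k : ℝ) (Ω : ℂ), Ω ^ 2 = -((k:ℂ) ^ 2 + (m:ℂ) ^ 2) → ∀ t ∈ Set.Icc (0:ℝ) T,
      (Complex.I * k - Ω) * Complex.exp (Ω * t) *
          (∫ x in Set.Iic (0:ℝ), Complex.exp (-Complex.I * k * x) * Ψ₂ (x, t))
      - Complex.I * m * (∫ s in (0:ℝ)..t, Complex.exp (Ω * s) * Ψ₁ (0, s))
      - Complex.I * m * Complex.exp (Ω * t) *
          (∫ x in Set.Iic (0:ℝ), Complex.exp (-Complex.I * k * x) * Ψ₁ (x, t))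
      + Complex.I * m *
          (∫ x in Set.Iic (0:ℝ), Complex.exp (-Complex.I * k * x) * Ψ₁ (x, 0))
      + (Ω - Complex.I * k) *
          (∫ x in Set.Iic (0:ℝ), Complex.exp (-Complex.I * k * x) * Ψ₂ (x, 0))
      + (Ω - Complex.I * k) * (∫ s in (0:ℝ)..t, Complex.exp (Ω * s) * Ψ₂ (0, s)) = 0 := by
  intro k Ω hΩ t ht
  have hmem₁ : Ψ₁ ∈ [Ψ₁, Ψ₂] := by simp
  have hmem₂ : Ψ₂ ∈ [Ψ₁, Ψ₂] := by simp
  obtain ⟨g₁, hg₁, hgb₁⟩ := hdom Ψ₁ hmem₁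
  obtain ⟨g₂, hg₂, hgb₂⟩ := hdom Ψ₂ hmem₂
  have hEcont : Continuous fun x : ℝ => Complex.exp (-Complex.I * k * x) :=
    Complex.continuous_exp.comp (continuous_const.mul Complex.continuous_ofReal)
  have hEb : ∃ C, ∀ x : ℝ, ‖Complex.exp (-Complex.I * k * x)‖ ≤ C :=
    ⟨1, fun x => le_of_eq (aux_normE k x)⟩
  -- the combined function
  set Θ : ℝ × ℝ → ℂ := fun p =>
    (-Complex.I * m) * Ψ₁ p + (Complex.I * k - Ω) * Ψ₂ p with hΘ
  have hΘcd : ContDiffOn ℝ 1 Θ (Set.Iic 0 ×ˢ Set.Icc 0 T) :=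
    (contDiffOn_const.mul hΨ₁).add (contDiffOn_const.mul hΨ₂)
  have hDtΘ : ∀ x ∈ Set.Iic (0:ℝ), ∀ s ∈ Set.Icc (0:ℝ) T,
      derivWithin (fun r : ℝ => Θ (x, r)) (Set.Icc 0 T) s
        = (-Complex.I * m) * derivWithin (fun r : ℝ => Ψ₁ (x, r)) (Set.Icc 0 T) s
          + (Complex.I * k - Ω) * derivWithin (fun r : ℝ => Ψ₂ (x, r)) (Set.Icc 0 T) s := by
    intro x hx s hs
    have h := (((aux_sliceT hT Ψ₁ hΨ₁ hx hs).1.const_mul (-Complex.I * m)).add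
      ((aux_sliceT hT Ψ₂ hΨ₂ hx hs).1.const_mul (Complex.I * k - Ω)))
    exact h.derivWithin ((uniqueDiffOn_Icc hT) s hs)
  have hΘint : ∀ s ∈ Set.Icc (0:ℝ) T, IntegrableOn (fun x => Θ (x, s)) (Set.Iic 0) := by
    intro s hs
    exact (((hint Ψ₁ hmem₁ s hs).1.const_mul _).add ((hint Ψ₂ hmem₂ s hs).1.const_mul _))
  set gΘ : ℝ → ℝ := fun x => ‖-Complex.I * (m:ℂ)‖ * g₁ x + ‖Complex.I * k - Ω‖ * g₂ x
    with hgΘdef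
  have hgΘ : IntegrableOn gΘ (Set.Iic 0) := (hg₁.const_mul _).add (hg₂.const_mul _)
  have hgbΘ : ∀ s ∈ Set.Icc (0:ℝ) T, ∀ x ∈ Set.Iic (0:ℝ),
      ‖derivWithin (fun r : ℝ => Θ (x, r)) (Set.Icc 0 T) s‖ ≤ gΘ x := by
    intro s hs x hx
    rw [hDtΘ x hx s hs]
    refine (norm_add_le _ _).trans (add_le_add ?_ ?_)
    · rw [norm_mul]
      exact mul_le_mul_of_nonneg_left (hgb₁ s hs x hx) (norm_nonneg _)
    · rw [norm_mul]
      exact mul_le_mul_of_nonneg_left (hgb₂ s hs x hx) (norm_nonneg _)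
  have EqA := aux_fubini hT Ω k Θ hΘcd hΘint gΘ hgΘ hgbΘ ht
  -- identify the inner x-integral using the PDE and integration by parts in x
  have hS : ∀ s ∈ Set.Ioc (0:ℝ) t,
      (∫ x in Set.Iic (0:ℝ), Complex.exp (Ω * s) * Complex.exp (-Complex.I * k * x) *
          (Ω * Θ (x, s) + derivWithin (fun u : ℝ => Θ (x, u)) (Set.Icc 0 T) s))
        = Complex.exp (Ω * s) * (Complex.I * m * Ψ₁ (0, s)
            + (Complex.I * k - Ω) * Ψ₂ (0, s)) := by
    intro s hs'
    have hsT : s ∈ Set.Icc (0:ℝ) T := ⟨le_of_lt hs'.1, le_trans hs'.2 ht.2⟩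
    have hstep : (∫ x in Set.Iic (0:ℝ), Complex.exp (Ω * s) *
          Complex.exp (-Complex.I * k * x) *
          (Ω * Θ (x, s) + derivWithin (fun u : ℝ => Θ (x, u)) (Set.Icc 0 T) s))
        = ∫ x in Set.Iic (0:ℝ),
            (Complex.exp (Ω * s) * (Ω * (-Complex.I * m) - Complex.I * m * (Complex.I * k - Ω)) *
              (Complex.exp (-Complex.I * k * x) * Ψ₁ (x, s))
            + Complex.exp (Ω * s) * (Ω * (Complex.I * k - Ω) - Complex.I * m * (-Complex.I * m)) *
              (Complex.exp (-Complex.I * k * x) * Ψ₂ (x, s))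
            + Complex.exp (Ω * s) * (Complex.I * m) *
              (Complex.exp (-Complex.I * k * x) *
                derivWithin (fun y : ℝ => Ψ₁ (y, s)) (Set.Iic 0) x)
            + Complex.exp (Ω * s) * (Complex.I * k - Ω) *
              (Complex.exp (-Complex.I * k * x) *
                derivWithin (fun y : ℝ => Ψ₂ (y, s)) (Set.Iic 0) x)) := by
      apply setIntegral_congr_fun measurableSet_Iic
      intro x hx
      dsimp only
      have hd1 : derivWithin (fun r : ℝ => Ψ₁ (x, r)) (Set.Icc 0 T) s
          = -derivWithin (fun y : ℝ => Ψ₁ (y, s)) (Set.Iic 0) x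
            - Complex.I * m * Ψ₂ (x, s) := by
        have h := pde₁ x hx s hsT
        linear_combination (-Complex.I) * h
          + (derivWithin (fun y : ℝ => Ψ₁ (y, s)) (Set.Iic 0) x
            + derivWithin (fun r : ℝ => Ψ₁ (x, r)) (Set.Icc 0 T) s) * Complex.I_sq
      have hd2 : derivWithin (fun r : ℝ => Ψ₂ (x, r)) (Set.Icc 0 T) s
          = derivWithin (fun y : ℝ => Ψ₂ (y, s)) (Set.Iic 0) x
            - Complex.I * m * Ψ₁ (x, s) := by
        have h := pde₂ x hx s hsT
        linear_combination (-Complex.I) * h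
          + (derivWithin (fun r : ℝ => Ψ₂ (x, r)) (Set.Icc 0 T) s
            - derivWithin (fun y : ℝ => Ψ₂ (y, s)) (Set.Iic 0) x) * Complex.I_sq
      rw [hDtΘ x hx s hsT, hd1, hd2, hΘ]
      ring
    rw [hstep]
    have hi1 : IntegrableOn (fun x : ℝ =>
        Complex.exp (-Complex.I * k * x) * Ψ₁ (x, s)) (Set.Iic 0) :=
      (hint Ψ₁ hmem₁ s hsT).1.bdd_mul hEcont.aestronglyMeasurable (ae_of_all _ hEb.choose_spec)
    have hi2 : IntegrableOn (fun x : ℝ =>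
        Complex.exp (-Complex.I * k * x) * Ψ₂ (x, s)) (Set.Iic 0) :=
      (hint Ψ₂ hmem₂ s hsT).1.bdd_mul hEcont.aestronglyMeasurable (ae_of_all _ hEb.choose_spec)
    have hi3 : IntegrableOn (fun x : ℝ => Complex.exp (-Complex.I * k * x) *
        derivWithin (fun y : ℝ => Ψ₁ (y, s)) (Set.Iic 0) x) (Set.Iic 0) :=
      (hint Ψ₁ hmem₁ s hsT).2.1.bdd_mul hEcont.aestronglyMeasurable (ae_of_all _ hEb.choose_spec)
    have hi4 : IntegrableOn (fun x : ℝ => Complex.exp (-Complex.I * k * x) *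
        derivWithin (fun y : ℝ => Ψ₂ (y, s)) (Set.Iic 0) x) (Set.Iic 0) :=
      (hint Ψ₂ hmem₂ s hsT).2.1.bdd_mul hEcont.aestronglyMeasurable (ae_of_all _ hEb.choose_spec)
    have e₁ : IntegrableOn (fun x : ℝ =>
        Complex.exp (Ω * s) * (Ω * (-Complex.I * m) - Complex.I * m * (Complex.I * k - Ω)) *
          (Complex.exp (-Complex.I * k * x) * Ψ₁ (x, s))) (Set.Iic 0) := hi1.const_mul _
    have e₂ : IntegrableOn (fun x : ℝ =>
        Complex.exp (Ω * s) * (Ω * (Complex.I * k - Ω) - Complex.I * m * (-Complex.I * m)) *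
          (Complex.exp (-Complex.I * k * x) * Ψ₂ (x, s))) (Set.Iic 0) := hi2.const_mul _
    have e₃ : IntegrableOn (fun x : ℝ =>
        Complex.exp (Ω * s) * (Complex.I * m) *
          (Complex.exp (-Complex.I * k * x) *
            derivWithin (fun y : ℝ => Ψ₁ (y, s)) (Set.Iic 0) x)) (Set.Iic 0) := hi3.const_mul _
    have e₄ : IntegrableOn (fun x : ℝ =>
        Complex.exp (Ω * s) * (Complex.I * k - Ω) *
          (Complex.exp (-Complex.I * k * x) *
            derivWithin (fun y : ℝ => Ψ₂ (y, s)) (Set.Iic 0) x)) (Set.Iic 0) := hi4.const_mul _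
    have e₁₂ : IntegrableOn (fun x : ℝ =>
        Complex.exp (Ω * s) * (Ω * (-Complex.I * m) - Complex.I * m * (Complex.I * k - Ω)) *
          (Complex.exp (-Complex.I * k * x) * Ψ₁ (x, s))
        + Complex.exp (Ω * s) * (Ω * (Complex.I * k - Ω) - Complex.I * m * (-Complex.I * m)) *
          (Complex.exp (-Complex.I * k * x) * Ψ₂ (x, s))) (Set.Iic 0) := e₁.add e₂
    have e₁₂₃ : IntegrableOn (fun x : ℝ =>
        Complex.exp (Ω * s) * (Ω * (-Complex.I * m) - Complex.I * m * (Complex.I * k - Ω)) *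
          (Complex.exp (-Complex.I * k * x) * Ψ₁ (x, s))
        + Complex.exp (Ω * s) * (Ω * (Complex.I * k - Ω) - Complex.I * m * (-Complex.I * m)) *
          (Complex.exp (-Complex.I * k * x) * Ψ₂ (x, s))
        + Complex.exp (Ω * s) * (Complex.I * m) *
          (Complex.exp (-Complex.I * k * x) *
            derivWithin (fun y : ℝ => Ψ₁ (y, s)) (Set.Iic 0) x)) (Set.Iic 0) := e₁₂.add e₃
    rw [MeasureTheory.integral_add e₁₂₃ e₄, MeasureTheory.integral_add e₁₂ e₃, MeasureTheory.integral_add e₁ e₂,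
      MeasureTheory.integral_const_mul, MeasureTheory.integral_const_mul, MeasureTheory.integral_const_mul, MeasureTheory.integral_const_mul]
    rw [aux_xftc hT k Ψ₁ hΨ₁ hsT (hint Ψ₁ hmem₁ s hsT).1 (hint Ψ₁ hmem₁ s hsT).2.1
        (hdecay Ψ₁ hmem₁ s hsT),
      aux_xftc hT k Ψ₂ hΨ₂ hsT (hint Ψ₂ hmem₂ s hsT).1 (hint Ψ₂ hmem₂ s hsT).2.1
        (hdecay Ψ₂ hmem₂ s hsT)]
    linear_combination (-Complex.exp (Ω * s) *
        (∫ x in Set.Iic (0:ℝ), Complex.exp (-Complex.I * k * x) * Ψ₂ (x, s))) * hΩ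
      + (Complex.exp (Ω * s) *
        (∫ x in Set.Iic (0:ℝ), Complex.exp (-Complex.I * k * x) * Ψ₂ (x, s)) *
        ((k:ℂ)^2 + (m:ℂ)^2)) * Complex.I_sq
  rw [setIntegral_congr_fun measurableSet_Ioc hS] at EqA
  rw [← intervalIntegral.integral_of_le ht.1] at EqA
  -- split the boundary integral
  have hbgen : ∀ (Ψ : ℝ × ℝ → ℂ), ContinuousOn (fun s => Ψ (0, s)) (Set.Icc 0 T) →
      IntervalIntegrable (fun s => Complex.exp (Ω * s) * Ψ (0, s)) volume 0 t := by
    intro Ψ hc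
    apply ContinuousOn.intervalIntegrable_of_Icc ht.1
    exact ((Complex.continuous_exp.comp
        (continuous_const.mul Complex.continuous_ofReal)).continuousOn).mul
      (hc.mono (Set.Icc_subset_Icc_right ht.2))
  have hbint₁ : IntervalIntegrable (fun s => Complex.exp (Ω * s) * Ψ₁ (0, s)) volume 0 t :=
    hbgen Ψ₁ (aux_sliceTcont hT Ψ₁ hΨ₁ (le_refl (0:ℝ))).1
  have hbint₂ : IntervalIntegrable (fun s => Complex.exp (Ω * s) * Ψ₂ (0, s)) volume 0 t :=
    hbgen Ψ₂ (aux_sliceTcont hT Ψ₂ hΨ₂ (le_refl (0:ℝ))).1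
  have hsplit : (∫ s in (0:ℝ)..t, Complex.exp (Ω * s) * (Complex.I * m * Ψ₁ (0, s)
        + (Complex.I * k - Ω) * Ψ₂ (0, s)))
      = Complex.I * m * (∫ s in (0:ℝ)..t, Complex.exp (Ω * s) * Ψ₁ (0, s))
        + (Complex.I * k - Ω) * (∫ s in (0:ℝ)..t, Complex.exp (Ω * s) * Ψ₂ (0, s)) := by
    have h1 : (∫ s in (0:ℝ)..t, Complex.exp (Ω * s) * (Complex.I * m * Ψ₁ (0, s)
          + (Complex.I * k - Ω) * Ψ₂ (0, s)))
        = ∫ s in (0:ℝ)..t, (Complex.I * m * (Complex.exp (Ω * s) * Ψ₁ (0, s))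
          + (Complex.I * k - Ω) * (Complex.exp (Ω * s) * Ψ₂ (0, s))) := by
      apply intervalIntegral.integral_congr
      intro s _
      ring
    rw [h1, intervalIntegral.integral_add (hbint₁.const_mul _) (hbint₂.const_mul _),
      intervalIntegral.integral_const_mul, intervalIntegral.integral_const_mul]
  rw [hsplit] at EqA
  -- split the x-integrals of Θ
  have hΘhat : ∀ u ∈ Set.Icc (0:ℝ) T,
      (∫ x in Set.Iic (0:ℝ), Complex.exp (-Complex.I * k * x) * Θ (x, u))
        = (-Complex.I * m) *
            (∫ x in Set.Iic (0:ℝ), Complex.exp (-Complex.I * k * x) * Ψ₁ (x, u))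
          + (Complex.I * k - Ω) *
            (∫ x in Set.Iic (0:ℝ), Complex.exp (-Complex.I * k * x) * Ψ₂ (x, u)) := by
    intro u hu
    have hi1 : IntegrableOn (fun x : ℝ =>
        Complex.exp (-Complex.I * k * x) * Ψ₁ (x, u)) (Set.Iic 0) :=
      (hint Ψ₁ hmem₁ u hu).1.bdd_mul hEcont.aestronglyMeasurable (ae_of_all _ hEb.choose_spec)
    have hi2 : IntegrableOn (fun x : ℝ =>
        Complex.exp (-Complex.I * k * x) * Ψ₂ (x, u)) (Set.Iic 0) :=
      (hint Ψ₂ hmem₂ u hu).1.bdd_mul hEcont.aestronglyMeasurable (ae_of_all _ hEb.choose_spec)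
    have h1 : (∫ x in Set.Iic (0:ℝ), Complex.exp (-Complex.I * k * x) * Θ (x, u))
        = ∫ x in Set.Iic (0:ℝ),
            ((-Complex.I * m) * (Complex.exp (-Complex.I * k * x) * Ψ₁ (x, u))
            + (Complex.I * k - Ω) * (Complex.exp (-Complex.I * k * x) * Ψ₂ (x, u))) := by
      apply setIntegral_congr_fun measurableSet_Iic
      intro x _
      rw [hΘ]
      ring
    rw [h1, MeasureTheory.integral_add (hi1.const_mul _) (hi2.const_mul _),
      MeasureTheory.integral_const_mul, MeasureTheory.integral_const_mul]
  rw [hΘhat t ht, hΘhat 0 ⟨le_refl _, le_of_lt hT⟩] at EqA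
  linear_combination (-1 : ℂ) * EqA

end DiracMain
end
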